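/- arXiv:1804.09084 — 9 statements merged into one kernel-verified Lean document; each statement's English description precedes it below -/
import Mathlib

section
/- For the function g(u) = (1/30)(2-u)^3(4+6u+u^2) on [0,2], the Laplace transform G(z) = ∫₀² e^{-zu} g(u) du satisfies G(z) = 16/(15z) - 8/(3z³) + 4/z⁴ - 4/z⁶ + (4e^{-2z}/z⁴)·((z+1)/z)², for all nonzero complex z. -/
open MeasureTheory intervalIntegral

set_option maxHeartbeats 1000000

theorem stmt_0 (z : ℂ) (hz : z ≠ 0) :
    (∫ u in (0:ℝ)..2, Complex.exp (-z * (u:ℂ)) *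
      ((1/30 * (2 - u)^3 * (4 + 6*u + u^2) : ℝ) : ℂ)) =
    16 / (15 * z) - 8 / (3 * z^3) + 4 / z^4 - 4 / z^6 +
      (4 * Complex.exp (-2 * z) / z^4) * ((z + 1) / z)^2 := by
  have h30 : (30:ℂ) * z^6 ≠ 0 := by
    apply mul_ne_zero (by norm_num) (pow_ne_zero _ hz)
  set P : ℝ → ℂ := fun u =>
    (32*z^5 - 80*z^3 + 120*z^2 - 120)
    + (-80*z^4 + 120*z^3 - 120*z) * u
    + (-40*z^5 + 60*z^4 - 60*z^2) * (u:ℂ)^2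
    + (20*z^5 - 20*z^3) * (u:ℂ)^3
    + (-5*z^4) * (u:ℂ)^4
    + (-z^5) * (u:ℂ)^5 with hP
  set F : ℝ → ℂ := fun u => -Complex.exp (-z * u) * P u / (30 * z^6) with hF
  have hderiv : ∀ u ∈ Set.uIcc (0:ℝ) 2, HasDerivAt F
      (Complex.exp (-z * u) * ((1/30 * (2 - u)^3 * (4 + 6*u + u^2) : ℝ) : ℂ)) u := by
    intro u _
    have h1 : HasDerivAt (fun w : ℂ => -z * w) (-z) (u : ℂ) := by
      simpa using (hasDerivAt_id (u:ℂ)).const_mul (-z)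
    have he : HasDerivAt (fun x : ℝ => Complex.exp (-z * x))
        (Complex.exp (-z * u) * -z) u := h1.cexp.comp_ofReal
    have hp : ∀ n : ℕ, HasDerivAt (fun x : ℝ => ((x:ℂ))^n)
        (n * (u:ℂ)^(n-1)) u := fun n => (hasDerivAt_pow n (u:ℂ)).comp_ofReal
    have hx : HasDerivAt (fun x : ℝ => ((x:ℂ))) 1 u := by
      simpa using (hp 1)
    have hq : HasDerivAt P
        ((-80*z^4 + 120*z^3 - 120*z)
         + (-40*z^5 + 60*z^4 - 60*z^2) * (2 * (u:ℂ))
         + (20*z^5 - 20*z^3) * (3 * (u:ℂ)^2)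
         + (-5*z^4) * (4 * (u:ℂ)^3)
         + (-z^5) * (5 * (u:ℂ)^4)) u := by
      have h0 := hasDerivAt_const u ((32:ℂ)*z^5 - 80*z^3 + 120*z^2 - 120)
      have H := ((((h0.add (hx.const_mul (-80*z^4 + 120*z^3 - 120*z))).add
        ((hp 2).const_mul (-40*z^5 + 60*z^4 - 60*z^2))).add
        ((hp 3).const_mul (20*z^5 - 20*z^3))).add
        ((hp 4).const_mul (-5*z^4))).add ((hp 5).const_mul (-z^5))
      rw [hP]
      refine H.congr_deriv ?_
      push_cast
      ring
    have hd := ((he.neg.mul hq).div_const (30 * z^6))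
    rw [hF]
    refine hd.congr_deriv (Eq.symm ?_)
    rw [eq_div_iff h30, hP]
    simp only [Pi.neg_apply]
    push_cast
    ring
  have hcont : Continuous (fun u : ℝ => Complex.exp (-z * u) *
      ((1/30 * (2 - u)^3 * (4 + 6*u + u^2) : ℝ) : ℂ)) := by
    fun_prop
  have hint := intervalIntegral.integral_eq_sub_of_hasDerivAt hderiv
    (hcont.intervalIntegrable 0 2)
  rw [hint]
  have e0 : Complex.exp (-z * ((0:ℝ):ℂ)) = 1 := by norm_num
  have e2 : Complex.exp (-z * ((2:ℝ):ℂ)) = Complex.exp (-2 * z) := by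
    norm_num; ring_nf
  simp only [hF, hP, e0, e2]
  push_cast
  field_simp
  have h8 : (z⁻¹:ℂ)^8 * z^8 = 1 := by
    rw [← mul_pow, inv_mul_cancel₀ hz, one_pow]
  linear_combination (0:ℂ) * h8
end

section
/- For all real y, the real part of G(iy) = ∫₀² g(u) e^{-iyu} du is nonnegative, where g(u) = (1/30)(2-u)^3(4+6u+u^2). -/
open Real intervalIntegral

theorem stmt_2 (y : ℝ) :
    0 ≤ (∫ u in (0:ℝ)..2, Complex.exp (-(Complex.I * y) * (u:ℂ)) *
      ((1/30 * (2 - u)^3 * (4 + 6*u + u^2) : ℝ) : ℂ)).re := by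
  -- Step 1: reduce to a real integral
  have hcont : Continuous fun u : ℝ => Complex.exp (-(Complex.I * y) * (u:ℂ)) *
      ((1/30 * (2 - u)^3 * (4 + 6*u + u^2) : ℝ) : ℂ) := by fun_prop
  have hint : IntervalIntegrable (fun u : ℝ => Complex.exp (-(Complex.I * y) * (u:ℂ)) *
      ((1/30 * (2 - u)^3 * (4 + 6*u + u^2) : ℝ) : ℂ)) MeasureTheory.volume 0 2 :=
    hcont.intervalIntegrable _ _
  have hre : (∫ u in (0:ℝ)..2, Complex.exp (-(Complex.I * y) * (u:ℂ)) *
      ((1/30 * (2 - u)^3 * (4 + 6*u + u^2) : ℝ) : ℂ)).re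
      = ∫ u in (0:ℝ)..2, (1/30 * (2 - u)^3 * (4 + 6*u + u^2)) * Real.cos (y*u) := by
    rw [show ∀ z : ℂ, z.re = Complex.reCLM z from fun _ => rfl,
      ← Complex.reCLM.intervalIntegral_comp_comm hint]
    apply intervalIntegral.integral_congr
    intro u _
    have h1 : -(Complex.I * (y:ℂ)) * (u:ℂ) = ((-(y*u) : ℝ) : ℂ) * Complex.I := by
      push_cast; ring
    simp only [Complex.reCLM_apply, h1]
    rw [mul_comm, Complex.re_ofReal_mul, Complex.exp_ofReal_mul_I_re, Real.cos_neg]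
  rw [hre]
  rcases eq_or_ne y 0 with hy | hy
  · subst hy
    simp only [zero_mul, Real.cos_zero, mul_one]
    apply intervalIntegral.integral_nonneg (by norm_num)
    intro u hu
    simp only [Set.mem_Icc] at hu
    have h1 : (0:ℝ) ≤ (2-u)^3 := pow_nonneg (by linarith [hu.2]) 3
    have h2 : (0:ℝ) ≤ 4+6*u+u^2 := by nlinarith [hu.1, sq_nonneg u]
    exact mul_nonneg (mul_nonneg (by norm_num) h1) h2
  · have key : ∀ u : ℝ, HasDerivAt (fun u : ℝ =>
        1/(30*y) * ((32 - 40*u^2 + 20*u^3 - u^5) * Real.sin (y*u))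
      + 1/(30*y^2) * ((-(80*u) + 60*u^2 - 5*u^4) * Real.cos (y*u))
      + 1/(30*y^3) * ((80 - 120*u + 20*u^3) * Real.sin (y*u))
      + 1/(30*y^4) * ((-120 + 60*u^2) * Real.cos (y*u))
      + 1/(30*y^5) * (-(120*u) * Real.sin (y*u))
      + 1/(30*y^6) * ((-120) * Real.cos (y*u)))
      ((1/30 * (2 - u)^3 * (4 + 6*u + u^2)) * Real.cos (y*u)) u := by
      intro u
      have hs : HasDerivAt (fun u : ℝ => Real.sin (y*u)) (y * Real.cos (y*u)) u := by
        simpa [mul_comm, Function.comp_def] using (Real.hasDerivAt_sin (y*u)).comp u ((hasDerivAt_id u).const_mul y)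
      have hc : HasDerivAt (fun u : ℝ => Real.cos (y*u)) (-(y * Real.sin (y*u))) u := by
        simpa [mul_comm, Function.comp_def] using (Real.hasDerivAt_cos (y*u)).comp u ((hasDerivAt_id u).const_mul y)
      have hid : HasDerivAt (fun u : ℝ => u) 1 u := hasDerivAt_id u
      have h2 : HasDerivAt (fun u : ℝ => u^2) (2*u) u := by simpa using hasDerivAt_pow 2 u
      have h3 : HasDerivAt (fun u : ℝ => u^3) (3*u^2) u := by simpa using hasDerivAt_pow 3 u
      have h4 : HasDerivAt (fun u : ℝ => u^4) (4*u^3) u := by simpa using hasDerivAt_pow 4 u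
      have h5 : HasDerivAt (fun u : ℝ => u^5) (5*u^4) u := by simpa using hasDerivAt_pow 5 u
      have p1 := (((hasDerivAt_const u (32:ℝ)).sub (h2.const_mul 40)).add (h3.const_mul 20)).sub h5
      have p2 := ((hid.const_mul (80:ℝ)).neg.add (h2.const_mul 60)).sub (h4.const_mul 5)
      have p3 := ((hasDerivAt_const u (80:ℝ)).sub (hid.const_mul 120)).add (h3.const_mul 20)
      have p4 := (hasDerivAt_const u (-120:ℝ)).add (h2.const_mul 60)
      have p5 := (hid.const_mul (120:ℝ)).neg
      have total := ((((((p1.mul hs).const_mul (1/(30*y))).add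
        ((p2.mul hc).const_mul (1/(30*y^2)))).add
        ((p3.mul hs).const_mul (1/(30*y^3)))).add
        ((p4.mul hc).const_mul (1/(30*y^4)))).add
        ((p5.mul hs).const_mul (1/(30*y^5)))).add
        ((hc.const_mul (-120:ℝ)).const_mul (1/(30*y^6)))
      refine total.congr_deriv ?_
      simp only [Pi.add_apply, Pi.sub_apply, Pi.neg_apply]
      field_simp
      ring
    have hgc : Continuous fun u : ℝ => (1/30 * (2 - u)^3 * (4 + 6*u + u^2)) * Real.cos (y*u) := by
      fun_prop
    rw [intervalIntegral.integral_eq_sub_of_hasDerivAt (fun u _ => key u)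
      (hgc.intervalIntegrable _ _)]
    have hy6 : y^6 ≠ 0 := pow_ne_zero _ hy
    have hs2 : Real.sin (y*2) = 2 * Real.sin y * Real.cos y := by
      rw [mul_comm]; exact Real.sin_two_mul y
    have hc2 : Real.cos (y*2) = 2 * Real.cos y^2 - 1 := by
      rw [mul_comm]; exact Real.cos_two_mul y
    have hp : Real.sin y^2 + Real.cos y^2 = 1 := Real.sin_sq_add_cos_sq y
    have hE : (1/(30*y) * ((32 - 40*(2:ℝ)^2 + 20*2^3 - 2^5) * Real.sin (y*2))
      + 1/(30*y^2) * ((-(80*2) + 60*2^2 - 5*2^4) * Real.cos (y*2))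
      + 1/(30*y^3) * ((80 - 120*2 + 20*2^3) * Real.sin (y*2))
      + 1/(30*y^4) * ((-120 + 60*2^2) * Real.cos (y*2))
      + 1/(30*y^5) * (-(120*2) * Real.sin (y*2))
      + 1/(30*y^6) * ((-120) * Real.cos (y*2)))
      - (1/(30*y) * ((32 - 40*(0:ℝ)^2 + 20*0^3 - 0^5) * Real.sin (y*0))
      + 1/(30*y^2) * ((-(80*0) + 60*0^2 - 5*0^4) * Real.cos (y*0))
      + 1/(30*y^3) * ((80 - 120*0 + 20*0^3) * Real.sin (y*0))
      + 1/(30*y^4) * ((-120 + 60*0^2) * Real.cos (y*0))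
      + 1/(30*y^5) * (-(120*0) * Real.sin (y*0))
      + 1/(30*y^6) * ((-120) * Real.cos (y*0)))
      = 8 * (Real.sin y - y * Real.cos y)^2 / y^6 := by
      rw [hs2, hc2, mul_zero, Real.sin_zero, Real.cos_zero]
      field_simp
      linear_combination (-240) * hp
    rw [hE]
    positivity
end

section
/- For every complex number z with Re z ≥ 0, Re G(z) ≥ 0, where G(z) = ∫₀² e^{-zu} g(u) du with g(u) = (1/30)(2-u)^3(4+6u+u^2). -/
set_option maxHeartbeats 1000000

open Complex intervalIntegral

noncomputable def aa (z w : ℂ) : ℂ :=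
  (-2/z^2 - 2/z^3) + (2/z + 2/z^2)*w + (-(1/z))*w^2
noncomputable def bb (z w : ℂ) : ℂ :=
  (-2/z^2 + 2/z^3) + (-2/z + 2/z^2)*w + (1/z)*w^2
noncomputable def mm (z w : ℂ) : ℂ :=
  0 + 0*w + (-2/z^2 - 2/z^3)*w^2 + ((4:ℂ)/3/z + 2/z^2 + (2:ℂ)/3/z^3)*w^3
  + (-1/z - (1:ℂ)/2/z^2)*w^4 + ((1:ℂ)/5/z)*w^5
noncomputable def cc (z w : ℂ) : ℂ :=
  (-(16:ℂ)/15/z + (8:ℂ)/3/z^3 - 4/z^4 + 4/z^6)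
  + ((8:ℂ)/3/z^2 - 4/z^3 + 4/z^5)*w
  + ((4:ℂ)/3/z - 2/z^2 + 2/z^4)*w^2
  + (-(2:ℂ)/3/z + (2:ℂ)/3/z^3)*w^3
  + ((1:ℂ)/6/z^2)*w^4
  + ((1:ℂ)/30/z)*w^5
noncomputable def FF (z : ℂ) (s : ℝ) : ℂ := Complex.exp (z*s) * aa z s - aa z 0

lemma hder_r (s : ℝ) : HasDerivAt (fun t : ℝ => ((t:ℂ))) 1 s := by
  simpa using (hasDerivAt_id s).ofReal_comp

lemma hder_exp (z : ℂ) (s : ℝ) :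
    HasDerivAt (fun t : ℝ => Complex.exp (z * t)) (Complex.exp (z * s) * z) s := by
  simpa using ((hder_r s).const_mul z).cexp

lemma hder_poly5 (C0 C1 C2 C3 C4 C5 : ℂ) (u : ℝ) :
    HasDerivAt (fun t : ℝ => C0 + C1*(t:ℂ) + C2*(t:ℂ)^2 + C3*(t:ℂ)^3 + C4*(t:ℂ)^4 + C5*(t:ℂ)^5)
      (C1 + 2*C2*(u:ℂ) + 3*C3*(u:ℂ)^2 + 4*C4*(u:ℂ)^3 + 5*C5*(u:ℂ)^4) u := by
  have h := hder_r u
  have key : (fun t : ℝ => C0 + C1*(t:ℂ) + C2*(t:ℂ)^2 + C3*(t:ℂ)^3 + C4*(t:ℂ)^4 + C5*(t:ℂ)^5)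
      = (fun t : ℝ => C0 + C1*(t:ℂ) + C2*((t:ℂ)*(t:ℂ)) + C3*((t:ℂ)*(t:ℂ)*(t:ℂ))
        + C4*((t:ℂ)*(t:ℂ)*(t:ℂ)*(t:ℂ)) + C5*((t:ℂ)*(t:ℂ)*(t:ℂ)*(t:ℂ)*(t:ℂ))) := by
    funext t; ring
  rw [key]
  have hh := (((((h.const_mul C1).const_add C0).add ((h.mul h).const_mul C2)).add
    (((h.mul h).mul h).const_mul C3)).add ((((h.mul h).mul h).mul h).const_mul C4)).add
    (((((h.mul h).mul h).mul h).mul h).const_mul C5)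
  refine hh.congr_deriv (Eq.symm ?_)
  simp only [Pi.mul_apply]
  ring

lemma hder_poly2 (C0 C1 C2 : ℂ) (u : ℝ) :
    HasDerivAt (fun t : ℝ => C0 + C1*(t:ℂ) + C2*(t:ℂ)^2) (C1 + 2*C2*(u:ℂ)) u := by
  have h := hder_r u
  have key : (fun t : ℝ => C0 + C1*(t:ℂ) + C2*(t:ℂ)^2)
      = (fun t : ℝ => C0 + C1*(t:ℂ) + C2*((t:ℂ)*(t:ℂ))) := by funext t; ring
  rw [key]
  have hh := ((h.const_mul C1).const_add C0).add ((h.mul h).const_mul C2)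
  refine hh.congr_deriv (Eq.symm ?_)
  ring

lemma hder_aa (z : ℂ) (u : ℝ) :
    HasDerivAt (fun t : ℝ => aa z t) ((2/z + 2/z^2) + 2*(-(1/z))*(u:ℂ)) u := by
  unfold aa; exact hder_poly2 _ _ _ u

lemma key_aa (z : ℂ) (hz : z ≠ 0) (w : ℂ) :
    z * aa z w + ((2/z + 2/z^2) + 2*(-(1/z))*w) = 2*w - w^2 := by
  unfold aa
  linear_combination ((2*w - w^2) + (-2+2*w)*z⁻¹ - 2*z⁻¹^2) * mul_inv_cancel₀ hz

lemma hder_FF (z : ℂ) (hz : z ≠ 0) (s : ℝ) :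
    HasDerivAt (FF z) (Complex.exp (z*s) * (2*s - (s:ℂ)^2)) s := by
  have h := ((hder_exp z s).mul (hder_aa z s)).sub_const (aa z 0)
  refine h.congr_deriv (Eq.symm ?_)
  linear_combination (-Complex.exp (z*s)) * (key_aa z hz (s:ℂ))

lemma cont_FF (z : ℂ) : Continuous (FF z) := by
  unfold FF aa
  fun_prop

lemma int2 (z : ℂ) :
    (∫ s in (0:ℝ)..2, (2*s - (s:ℂ)^2) * aa z s) = mm z 2 - mm z 0 := by
  have hd : ∀ s ∈ Set.uIcc (0:ℝ) 2, HasDerivAt (fun t : ℝ => mm z t)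
      ((2*s - (s:ℂ)^2) * aa z s) s := by
    intro s _
    have h : HasDerivAt (fun t : ℝ => mm z t)
        (0 + 2*(-2/z^2 - 2/z^3)*(s:ℂ) + 3*((4:ℂ)/3/z + 2/z^2 + (2:ℂ)/3/z^3)*(s:ℂ)^2
          + 4*(-1/z - (1:ℂ)/2/z^2)*(s:ℂ)^3 + 5*((1:ℂ)/5/z)*(s:ℂ)^4) s := by
      unfold mm; exact hder_poly5 _ _ _ _ _ _ s
    convert h using 1
    unfold aa; ring
  have hi : IntervalIntegrable (fun s : ℝ => (2*s - (s:ℂ)^2) * aa z s)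
      MeasureTheory.volume 0 2 := by
    apply Continuous.intervalIntegrable
    unfold aa; fun_prop
  have := integral_eq_sub_of_hasDerivAt hd hi
  simpa using this

lemma int3 (z : ℂ) (hz : z ≠ 0) :
    (∫ s in (0:ℝ)..2, Complex.exp (-z*s) * (2*s - (s:ℂ)^2))
      = Complex.exp (-z*2) * bb z 2 - bb z 0 := by
  have key : ∀ w : ℂ, -z * bb z w + ((-2/z + 2/z^2) + 2*(1/z)*w) = 2*w - w^2 := by
    intro w
    unfold bb
    linear_combination ((2*w - w^2) + (2-2*w)*z⁻¹ - 2*z⁻¹^2) * mul_inv_cancel₀ hz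
  have hd : ∀ s ∈ Set.uIcc (0:ℝ) 2, HasDerivAt (fun t : ℝ => Complex.exp (-z*t) * bb z t)
      (Complex.exp (-z*s) * (2*s - (s:ℂ)^2)) s := by
    intro s _
    have hb : HasDerivAt (fun t : ℝ => bb z t) ((-2/z + 2/z^2) + 2*(1/z)*(s:ℂ)) s := by
      unfold bb; exact hder_poly2 _ _ _ s
    have h := (hder_exp (-z) s).mul hb
    refine h.congr_deriv (Eq.symm ?_)
    linear_combination (-Complex.exp (-z*(s:ℂ))) * key (s:ℂ)
  have hi : IntervalIntegrable (fun s : ℝ => Complex.exp (-z*s) * (2*s - (s:ℂ)^2))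
      MeasureTheory.volume 0 2 := by
    apply Continuous.intervalIntegrable; fun_prop
  have := integral_eq_sub_of_hasDerivAt hd hi
  norm_num at this
  convert this using 2 <;> norm_num

lemma int1 (z : ℂ) (hz : z ≠ 0) :
    (∫ u in (0:ℝ)..2, Complex.exp (-z*u) *
        (16/15 - (4:ℂ)/3*(u:ℂ)^2 + (2:ℂ)/3*(u:ℂ)^3 - (1:ℂ)/30*(u:ℂ)^5))
      = Complex.exp (-z*2) * cc z 2 - cc z 0 := by
  have key : ∀ w : ℂ, -z * cc z w + (((8:ℂ)/3/z^2 - 4/z^3 + 4/z^5)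
        + 2*((4:ℂ)/3/z - 2/z^2 + 2/z^4)*w + 3*(-(2:ℂ)/3/z + (2:ℂ)/3/z^3)*w^2
        + 4*((1:ℂ)/6/z^2)*w^3 + 5*((1:ℂ)/30/z)*w^4)
      = 16/15 - (4:ℂ)/3*w^2 + (2:ℂ)/3*w^3 - (1:ℂ)/30*w^5 := by
    intro w
    unfold cc
    linear_combination ((16/15 - (4:ℂ)/3*w^2 + (2:ℂ)/3*w^3 - (1:ℂ)/30*w^5)
      - ((8:ℂ)/3*w - 2*w^2 + (1:ℂ)/6*w^4)*z⁻¹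
      - ((8:ℂ)/3 - 4*w + (2:ℂ)/3*w^3)*z⁻¹^2
      - (-4 + 2*w^2)*z⁻¹^3 - (4*w)*z⁻¹^4 - 4*z⁻¹^5) * mul_inv_cancel₀ hz
  have hd : ∀ u ∈ Set.uIcc (0:ℝ) 2, HasDerivAt (fun t : ℝ => Complex.exp (-z*t) * cc z t)
      (Complex.exp (-z*u) * (16/15 - (4:ℂ)/3*(u:ℂ)^2 + (2:ℂ)/3*(u:ℂ)^3 - (1:ℂ)/30*(u:ℂ)^5)) u := by
    intro u _
    have hc : HasDerivAt (fun t : ℝ => cc z t)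
        (((8:ℂ)/3/z^2 - 4/z^3 + 4/z^5) + 2*((4:ℂ)/3/z - 2/z^2 + 2/z^4)*(u:ℂ)
          + 3*(-(2:ℂ)/3/z + (2:ℂ)/3/z^3)*(u:ℂ)^2 + 4*((1:ℂ)/6/z^2)*(u:ℂ)^3
          + 5*((1:ℂ)/30/z)*(u:ℂ)^4) u := by
      have h := hder_poly5 (-(16:ℂ)/15/z + (8:ℂ)/3/z^3 - 4/z^4 + 4/z^6)
        ((8:ℂ)/3/z^2 - 4/z^3 + 4/z^5) ((4:ℂ)/3/z - 2/z^2 + 2/z^4)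
        (-(2:ℂ)/3/z + (2:ℂ)/3/z^3) ((1:ℂ)/6/z^2) ((1:ℂ)/30/z) u
      unfold cc; exact h
    have h := (hder_exp (-z) u).mul hc
    refine h.congr_deriv (Eq.symm ?_)
    linear_combination (-Complex.exp (-z*(u:ℂ))) * key (u:ℂ)
  have hi : IntervalIntegrable (fun u : ℝ => Complex.exp (-z*u) *
      (16/15 - (4:ℂ)/3*(u:ℂ)^2 + (2:ℂ)/3*(u:ℂ)^3 - (1:ℂ)/30*(u:ℂ)^5))
      MeasureTheory.volume 0 2 := by
    apply Continuous.intervalIntegrable; fun_prop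
  have := integral_eq_sub_of_hasDerivAt hd hi
  norm_num at this
  convert this using 2 <;> norm_num

lemma closed_eq (z : ℂ) :
    Complex.exp (-z*2) * cc z 2 - cc z 0
      = (mm z 2 - mm z 0) - aa z 0 * (Complex.exp (-z*2) * bb z 2 - bb z 0) := by
  unfold aa bb cc mm; ring

lemma intI (z : ℂ) (hz : z ≠ 0) :
    (∫ s in (0:ℝ)..2, Complex.exp (-z*s) * (2*s - (s:ℂ)^2) * FF z s)
      = (mm z 2 - mm z 0) - aa z 0 * (Complex.exp (-z*2) * bb z 2 - bb z 0) := by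
  have hpt : Set.EqOn (fun s : ℝ => Complex.exp (-z*s) * (2*s - (s:ℂ)^2) * FF z s)
      (fun s : ℝ => (2*s - (s:ℂ)^2) * aa z s
        - aa z 0 * (Complex.exp (-z*s) * (2*s - (s:ℂ)^2))) (Set.uIcc 0 2) := by
    intro s _
    have h1 : Complex.exp (-z*(s:ℂ)) * Complex.exp (z*(s:ℂ)) = 1 := by
      rw [← Complex.exp_add, show -z*(s:ℂ) + z*(s:ℂ) = 0 by ring, Complex.exp_zero]
    show Complex.exp (-z*s) * (2*s - (s:ℂ)^2) * FF z s = _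
    unfold FF
    linear_combination (2*(s:ℂ) - (s:ℂ)^2) * (aa z (s:ℂ)) * h1
  rw [integral_congr hpt]
  have c1 : Continuous (fun s : ℝ => (2*s - (s:ℂ)^2) * aa z s) := by
    unfold aa; fun_prop
  have c2 : Continuous (fun s : ℝ => Complex.exp (-z*s) * (2*s - (s:ℂ)^2)) := by fun_prop
  rw [integral_sub (c1.intervalIntegrable _ _) ((c2.intervalIntegrable _ _).const_mul (aa z 0)),
    intervalIntegral.integral_const_mul, int2 z, int3 z hz]

lemma repos (z : ℂ) (hz0 : 0 ≤ z.re) (hz : z ≠ 0) :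
    0 ≤ (∫ s in (0:ℝ)..2, Complex.exp (-z*s) * (2*s - (s:ℂ)^2) * FF z s).re := by
  set x := z.re with hx
  set N : ℝ → ℝ := fun s => Complex.normSq (FF z s) with hN
  set r : ℝ → ℝ := fun s => (Complex.exp (-z*s) * (2*s - (s:ℂ)^2) * FF z s).re with hr
  have cE : Continuous (fun s : ℝ => Complex.exp (-z*s)) := by fun_prop
  have ch : Continuous (fun s : ℝ => (2*s - (s:ℂ)^2)) := by fun_prop
  have cbig : Continuous (fun s : ℝ => Complex.exp (-z*s) * (2*s - (s:ℂ)^2) * FF z s) :=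
    (cE.mul ch).mul (cont_FF z)
  have hInt : IntervalIntegrable (fun s : ℝ => Complex.exp (-z*s) * (2*s - (s:ℂ)^2) * FF z s)
      MeasureTheory.volume 0 2 := cbig.intervalIntegrable _ _
  have hre : (∫ s in (0:ℝ)..2, Complex.exp (-z*s) * (2*s - (s:ℂ)^2) * FF z s).re
      = ∫ s in (0:ℝ)..2, r s := by
    have := Complex.reCLM.intervalIntegral_comp_comm hInt
    simp only [Complex.reCLM_apply] at this
    rw [← this]
  rw [hre]
  -- pointwise derivative facts
  have hcontN : Continuous N := Complex.continuous_normSq.comp (cont_FF z)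
  have hcontE : Continuous (fun s : ℝ => Real.exp (-(2*x)*s)) := by fun_prop
  have hcontr : Continuous r := Complex.continuous_re.comp cbig
  have hU : ∀ s : ℝ, HasDerivAt (fun t : ℝ => 1/2 * (Real.exp (-(2*x)*t) * N t))
      (r s - x * (Real.exp (-(2*x)*s) * N s)) s := by
    intro s
    have hF := hder_FF z hz s
    have hp : HasDerivAt (fun t : ℝ => (FF z t).re)
        ((Complex.exp (z*s) * (2*s - (s:ℂ)^2)).re) s := by
      exact (Complex.reCLM.hasFDerivAt.comp_hasDerivAt s hF :)
    have hq : HasDerivAt (fun t : ℝ => (FF z t).im)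
        ((Complex.exp (z*s) * (2*s - (s:ℂ)^2)).im) s := by
      exact (Complex.imCLM.hasFDerivAt.comp_hasDerivAt s hF :)
    have hNder : HasDerivAt N
        (2*((FF z s).re * (Complex.exp (z*s) * (2*s - (s:ℂ)^2)).re
          + (FF z s).im * (Complex.exp (z*s) * (2*s - (s:ℂ)^2)).im)) s := by
      have h := (hp.mul hp).add (hq.mul hq)
      have keyN : N = fun t => (FF z t).re * (FF z t).re + (FF z t).im * (FF z t).im :=
        funext fun t => Complex.normSq_apply _
      rw [keyN]
      refine h.congr_deriv (Eq.symm ?_)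
      ring
    have hEx : HasDerivAt (fun t : ℝ => Real.exp (-(2*x)*t))
        (Real.exp (-(2*x)*s) * (-(2*x))) s := by
      simpa using ((hasDerivAt_id s).const_mul (-(2*x))).exp
    have h := (hEx.mul hNder).const_mul (1/2 : ℝ)
    refine h.congr_deriv (Eq.symm ?_)
    -- real identity: r s - x * (E*N) = 1/2*(E'*N + E*N')
    have keyexp : Complex.exp (-z*(s:ℂ))
        = ((Real.exp (-(2*x)*s) : ℝ) : ℂ) * (starRingEnd ℂ) (Complex.exp (z*(s:ℂ))) := by
      rw [← Complex.exp_conj, Complex.ofReal_exp, ← Complex.exp_add]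
      congr 1
      rw [map_mul, Complex.conj_ofReal]
      have hc2 : z + (starRingEnd ℂ) z = 2*(x:ℂ) := by
        rw [hx]; exact_mod_cast Complex.add_conj z
      push_cast
      linear_combination (-(s:ℂ)) * hc2
    have hrs : r s = Real.exp (-(2*x)*s) * ((FF z s).re * (Complex.exp (z*s) * (2*s - (s:ℂ)^2)).re
        + (FF z s).im * (Complex.exp (z*s) * (2*s - (s:ℂ)^2)).im) := by
      have hcast : (2*(s:ℂ) - (s:ℂ)^2) = ((2*s - s^2 : ℝ) : ℂ) := by push_cast; ring
      rw [hr]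
      show (Complex.exp (-z*s) * (2*s - (s:ℂ)^2) * FF z s).re = _
      rw [keyexp, hcast]
      simp only [Complex.mul_re, Complex.mul_im, Complex.conj_re, Complex.conj_im,
        Complex.ofReal_re, Complex.ofReal_im]
      ring
    rw [hrs, hN]
    simp only [Complex.normSq_apply]
    ring
  have hsub : IntervalIntegrable (fun s : ℝ => x * (Real.exp (-(2*x)*s) * N s))
      MeasureTheory.volume 0 2 := (continuous_const.mul (hcontE.mul hcontN)).intervalIntegrable _ _
  have h7 : (∫ s in (0:ℝ)..2, (r s - x * (Real.exp (-(2*x)*s) * N s)))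
      = 1/2 * (Real.exp (-(2*x)*2) * N 2) - 1/2 * (Real.exp (-(2*x)*0) * N 0) :=
    integral_eq_sub_of_hasDerivAt (fun s _ => hU s)
      ((hcontr.sub (continuous_const.mul (hcontE.mul hcontN))).intervalIntegrable _ _)
  rw [integral_sub (hcontr.intervalIntegrable _ _) hsub] at h7
  have hFF0 : FF z 0 = 0 := by
    unfold FF
    simp
  have hN0 : N 0 = 0 := by rw [hN]; simp [hFF0]
  have hterm1 : 0 ≤ 1/2 * (Real.exp (-(2*x)*2) * N 2) := by
    apply mul_nonneg (by norm_num)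
    exact mul_nonneg (Real.exp_nonneg _) (Complex.normSq_nonneg _)
  have hterm2 : 0 ≤ ∫ s in (0:ℝ)..2, x * (Real.exp (-(2*x)*s) * N s) := by
    apply intervalIntegral.integral_nonneg (by norm_num)
    intro s _
    exact mul_nonneg hz0 (mul_nonneg (Real.exp_nonneg _) (Complex.normSq_nonneg _))
  have : (∫ s in (0:ℝ)..2, r s)
      = 1/2 * (Real.exp (-(2*x)*2) * N 2) - 1/2 * (Real.exp (-(2*x)*0) * N 0)
        + ∫ s in (0:ℝ)..2, x * (Real.exp (-(2*x)*s) * N s) := by linarith [h7]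
  rw [this, hN0]
  simp only [mul_zero, sub_zero]
  positivity

theorem stmt_3 (z : ℂ) (hz : 0 ≤ z.re) :
    0 ≤ (∫ u in (0:ℝ)..2, Complex.exp (-z * (u:ℂ)) *
      ((1/30 * (2 - u)^3 * (4 + 6*u + u^2) : ℝ) : ℂ)).re := by
  rcases eq_or_ne z 0 with rfl | hz0
  · have h1 : (fun u : ℝ => Complex.exp (-(0:ℂ) * (u:ℂ)) *
        ((1/30 * (2 - u)^3 * (4 + 6*u + u^2) : ℝ) : ℂ))
        = fun u : ℝ => ((1/30 * (2 - u)^3 * (4 + 6*u + u^2) : ℝ) : ℂ) := by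
      funext u; simp
    rw [h1, intervalIntegral.integral_ofReal]
    simp only [Complex.ofReal_re]
    apply intervalIntegral.integral_nonneg (by norm_num)
    intro u hu
    have h2 : (0:ℝ) ≤ 2 - u := by linarith [hu.2]
    have h3 : (0:ℝ) ≤ 4 + 6*u + u^2 := by nlinarith [hu.1]
    positivity
  · have e0 : (∫ u in (0:ℝ)..2, Complex.exp (-z * (u:ℂ)) *
        ((1/30 * (2 - u)^3 * (4 + 6*u + u^2) : ℝ) : ℂ))
        = ∫ u in (0:ℝ)..2, Complex.exp (-z*u) *
            (16/15 - (4:ℂ)/3*(u:ℂ)^2 + (2:ℂ)/3*(u:ℂ)^3 - (1:ℂ)/30*(u:ℂ)^5) := by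
      apply integral_congr
      intro u _
      show Complex.exp (-z * (u:ℂ)) * ((1/30 * (2 - u)^3 * (4 + 6*u + u^2) : ℝ) : ℂ) = _
      push_cast
      ring
    rw [e0, int1 z hz0, closed_eq z, ← intI z hz0]
    exact repos z hz hz0
end

section
/- Let F(z) = ∫₀² e^{-zv} f(v) dv with f continuous, f ≥ 0 on [0,2], and f not identically zero. Then for every t with |t| ≤ π/2, the function x ↦ Re F(x+it)/F(x) is monotonically increasing on all of ℝ. -/
open MeasureTheory Set

private lemma aux_int (f : ℝ → ℝ) (hfc : ContinuousOn f (Set.Icc 0 2))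
    (g : ℝ → ℝ) (hg : Continuous g) :
    IntegrableOn (fun v => g v * f v) (Set.Ioc 0 2) := by
  apply IntegrableOn.mono_set _ Set.Ioc_subset_Icc_self
  exact (hg.continuousOn.mul hfc).integrableOn_Icc

private lemma aux_intC (f : ℝ → ℝ) (hfc : ContinuousOn f (Set.Icc 0 2)) (z : ℂ) :
    IntegrableOn (fun v : ℝ => Complex.exp (-z * (v:ℂ)) * (f v : ℂ)) (Set.Ioc 0 2) := by
  apply IntegrableOn.mono_set _ Set.Ioc_subset_Icc_self
  apply ContinuousOn.integrableOn_Icc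
  exact (Complex.continuous_exp.comp
      ((continuous_const.mul Complex.continuous_ofReal))).continuousOn.mul
    (Complex.continuous_ofReal.comp_continuousOn hfc)

private lemma aux_re (f : ℝ → ℝ) (hfc : ContinuousOn f (Set.Icc 0 2)) (x t : ℝ) :
    (∫ v in (0:ℝ)..2, Complex.exp (-(↑x + ↑t * Complex.I) * (v:ℂ)) * (f v : ℂ)).re
      = ∫ v in Set.Ioc (0:ℝ) 2, Real.cos (t*v) * Real.exp (-x*v) * f v := by
  rw [intervalIntegral.integral_of_le (by norm_num : (0:ℝ) ≤ 2)]
  have hcc := (ContinuousLinearMap.integral_comp_comm Complex.reCLM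
    (aux_intC f hfc (↑x + ↑t * Complex.I))).symm
  simp only [Complex.reCLM_apply] at hcc
  rw [hcc]
  apply setIntegral_congr_fun measurableSet_Ioc
  intro v _
  simp only [Complex.mul_re, Complex.exp_re, Complex.exp_im, Complex.ofReal_re,
    Complex.ofReal_im, mul_zero, sub_zero, Complex.neg_re, Complex.neg_im, Complex.mul_im,
    Complex.add_re, Complex.add_im, Complex.I_re, Complex.I_im, Real.cos_neg]
  ring_nf
  rw [Real.cos_neg]
  ring

private lemma aux_pos (f : ℝ → ℝ) (hfc : ContinuousOn f (Set.Icc 0 2))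
    (hfnn : ∀ v ∈ Set.Icc (0:ℝ) 2, 0 ≤ f v)
    (hfne : ∃ v ∈ Set.Icc (0:ℝ) 2, f v ≠ 0) (x : ℝ) :
    0 < ∫ v in Set.Ioc (0:ℝ) 2, Real.exp (-x*v) * f v := by
  rw [setIntegral_pos_iff_support_of_nonneg_ae]
  · obtain ⟨c, hc, hcne⟩ := hfne
    have hct : ContinuousWithinAt f (Set.Icc 0 2) c := hfc c hc
    have hev : ∀ᶠ v in nhdsWithin c (Set.Icc 0 2), f v ≠ 0 :=
      hct.eventually_ne hcne
    obtain ⟨ε, hε, hball⟩ := Metric.mem_nhdsWithin_iff.mp hev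
    set a := max 0 (c - ε) with ha
    set b := min 2 (c + ε) with hb
    have hab : a < b := by
      apply max_lt
      · exact lt_min (by norm_num) (by linarith [hc.1])
      · exact lt_min (by linarith [hc.2]) (by linarith)
    have hsub : Set.Ioo a b ⊆ Function.support (fun v => Real.exp (-x*v) * f v)
        ∩ Set.Ioc 0 2 := by
      intro v hv
      have hv1 : 0 < v := lt_of_le_of_lt (le_max_left _ _) hv.1
      have hv2 : v ≤ 2 := le_of_lt (lt_of_lt_of_le hv.2 (min_le_left _ _))
      have hvIcc : v ∈ Set.Icc (0:ℝ) 2 := ⟨hv1.le, hv2⟩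
      have hdist : dist v c < ε := by
        rw [Real.dist_eq, abs_lt]
        constructor
        · have := lt_of_le_of_lt (le_max_right _ _) hv.1; linarith
        · have := lt_of_lt_of_le hv.2 (min_le_right _ _); linarith
      have hfv : f v ≠ 0 := hball ⟨Metric.mem_ball.mpr hdist, hvIcc⟩
      refine ⟨?_, hv1, hv2⟩
      simp only [Function.mem_support]
      exact mul_ne_zero (Real.exp_ne_zero _) hfv
    calc (0:ENNReal) < volume (Set.Ioo a b) := by
          rw [Real.volume_Ioo]; simp [hab]
      _ ≤ _ := measure_mono hsub
  · filter_upwards [ae_restrict_mem measurableSet_Ioc] with v hv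
    exact mul_nonneg (Real.exp_pos _).le (hfnn v ⟨hv.1.le, hv.2⟩)
  · exact aux_int f hfc _ (Real.continuous_exp.comp (by continuity))

private lemma aux_sign {t x₁ x₂ u v : ℝ} (ht : |t| ≤ Real.pi / 2) (hx : x₁ ≤ x₂)
    (hu : u ∈ Set.Icc (0:ℝ) 2) (hv : v ∈ Set.Icc (0:ℝ) 2) :
    (Real.cos (t*u) - Real.cos (t*v)) *
      (Real.exp (-x₁*u) * Real.exp (-x₂*v) - Real.exp (-x₂*u) * Real.exp (-x₁*v)) ≤ 0 := by
  have hcos : ∀ a b : ℝ, a ∈ Set.Icc (0:ℝ) 2 → b ∈ Set.Icc (0:ℝ) 2 → a ≤ b →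
      Real.cos (t*b) ≤ Real.cos (t*a) := by
    intro a b ha hb hab
    have h1 : |t| * a = |t * a| := by rw [abs_mul, abs_of_nonneg ha.1]
    have h2 : |t| * b = |t * b| := by rw [abs_mul, abs_of_nonneg hb.1]
    rw [show Real.cos (t*a) = Real.cos (|t| * a) by rw [h1, Real.cos_abs],
      show Real.cos (t*b) = Real.cos (|t| * b) by rw [h2, Real.cos_abs]]
    apply Real.cos_le_cos_of_nonneg_of_le_pi
    · exact mul_nonneg (abs_nonneg _) ha.1
    · calc |t| * b ≤ Real.pi/2 * 2 :=
            mul_le_mul ht hb.2 hb.1 (by positivity)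
        _ = Real.pi := by ring
    · exact mul_le_mul_of_nonneg_left hab (abs_nonneg _)
  have hexp : ∀ a b : ℝ, a ≤ b →
      Real.exp (-x₁*a) * Real.exp (-x₂*b) ≤ Real.exp (-x₂*a) * Real.exp (-x₁*b) := by
    intro a b hab
    rw [← Real.exp_add, ← Real.exp_add]
    apply Real.exp_le_exp.mpr
    nlinarith
  rcases le_total u v with huv | huv
  · apply mul_nonpos_of_nonneg_of_nonpos
    · linarith [hcos u v hu hv huv]
    · linarith [hexp u v huv]
  · apply mul_nonpos_of_nonpos_of_nonneg
    · linarith [hcos v u hv hu huv]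
    · linarith [hexp v u huv]

private lemma aux_main (f : ℝ → ℝ) (hfc : ContinuousOn f (Set.Icc 0 2))
    (hfnn : ∀ v ∈ Set.Icc (0:ℝ) 2, 0 ≤ f v)
    (t x₁ x₂ : ℝ) (ht : |t| ≤ Real.pi / 2) (hx : x₁ ≤ x₂) :
    (∫ u in Set.Ioc (0:ℝ) 2, Real.cos (t*u) * Real.exp (-x₁*u) * f u) *
      (∫ v in Set.Ioc (0:ℝ) 2, Real.exp (-x₂*v) * f v)
    ≤ (∫ u in Set.Ioc (0:ℝ) 2, Real.cos (t*u) * Real.exp (-x₂*u) * f u) *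
      (∫ v in Set.Ioc (0:ℝ) 2, Real.exp (-x₁*v) * f v) := by
  set μ : Measure ℝ := volume.restrict (Set.Ioc (0:ℝ) 2) with hμ
  set a₁ : ℝ → ℝ := fun u => Real.cos (t*u) * Real.exp (-x₁*u) * f u with ha₁
  set a₂ : ℝ → ℝ := fun u => Real.cos (t*u) * Real.exp (-x₂*u) * f u with ha₂
  set b₁ : ℝ → ℝ := fun u => Real.exp (-x₁*u) * f u with hb₁
  set b₂ : ℝ → ℝ := fun u => Real.exp (-x₂*u) * f u with hb₂
  have hc1 : ∀ y : ℝ, Continuous fun u : ℝ => Real.cos (t*u) * Real.exp (-y*u) := fun y =>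
    (Real.continuous_cos.comp (continuous_const.mul continuous_id)).mul
      (Real.continuous_exp.comp (continuous_const.mul continuous_id))
  have hc2 : ∀ y : ℝ, Continuous fun u : ℝ => Real.exp (-y*u) := fun y =>
    Real.continuous_exp.comp (continuous_const.mul continuous_id)
  have hIa₁ : Integrable a₁ μ := aux_int f hfc _ (hc1 x₁)
  have hIa₂ : Integrable a₂ μ := aux_int f hfc _ (hc1 x₂)
  have hIb₁ : Integrable b₁ μ := aux_int f hfc _ (hc2 x₁)
  have hIb₂ : Integrable b₂ μ := aux_int f hfc _ (hc2 x₂)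
  have key : ∫ z : ℝ × ℝ, (a₁ z.1 * b₂ z.2 + b₂ z.1 * a₁ z.2)
      - (a₂ z.1 * b₁ z.2 + b₁ z.1 * a₂ z.2) ∂(μ.prod μ) ≤ 0 := by
    apply integral_nonpos_of_ae
    have hmem : ∀ᵐ z : ℝ × ℝ ∂(μ.prod μ),
        z ∈ Set.Ioc (0:ℝ) 2 ×ˢ Set.Ioc (0:ℝ) 2 := by
      rw [hμ, Measure.prod_restrict]
      exact ae_restrict_mem (measurableSet_Ioc.prod measurableSet_Ioc)
    filter_upwards [hmem] with z hz
    obtain ⟨hz1, hz2⟩ := hz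
    have hid : (a₁ z.1 * b₂ z.2 + b₂ z.1 * a₁ z.2)
        - (a₂ z.1 * b₁ z.2 + b₁ z.1 * a₂ z.2)
        = ((Real.cos (t*z.1) - Real.cos (t*z.2)) *
            (Real.exp (-x₁*z.1) * Real.exp (-x₂*z.2)
              - Real.exp (-x₂*z.1) * Real.exp (-x₁*z.2))) * (f z.1 * f z.2) := by
      simp only [ha₁, ha₂, hb₁, hb₂]; ring
    rw [hid]
    apply mul_nonpos_of_nonpos_of_nonneg
    · exact aux_sign ht hx (Set.Ioc_subset_Icc_self hz1) (Set.Ioc_subset_Icc_self hz2)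
    · exact mul_nonneg (hfnn _ (Set.Ioc_subset_Icc_self hz1))
        (hfnn _ (Set.Ioc_subset_Icc_self hz2))
  have h1 : ∫ z : ℝ × ℝ, a₁ z.1 * b₂ z.2 ∂(μ.prod μ)
      = (∫ u, a₁ u ∂μ) * ∫ v, b₂ v ∂μ := integral_prod_mul a₁ b₂
  have h2 : ∫ z : ℝ × ℝ, b₂ z.1 * a₁ z.2 ∂(μ.prod μ)
      = (∫ u, b₂ u ∂μ) * ∫ v, a₁ v ∂μ := integral_prod_mul b₂ a₁
  have h3 : ∫ z : ℝ × ℝ, a₂ z.1 * b₁ z.2 ∂(μ.prod μ)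
      = (∫ u, a₂ u ∂μ) * ∫ v, b₁ v ∂μ := integral_prod_mul a₂ b₁
  have h4 : ∫ z : ℝ × ℝ, b₁ z.1 * a₂ z.2 ∂(μ.prod μ)
      = (∫ u, b₁ u ∂μ) * ∫ v, a₂ v ∂μ := integral_prod_mul b₁ a₂
  have hP : Integrable (fun z : ℝ × ℝ => a₁ z.1 * b₂ z.2 + b₂ z.1 * a₁ z.2) (μ.prod μ) :=
    (hIa₁.mul_prod hIb₂).add (hIb₂.mul_prod hIa₁)
  have hQ : Integrable (fun z : ℝ × ℝ => a₂ z.1 * b₁ z.2 + b₁ z.1 * a₂ z.2) (μ.prod μ) :=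
    (hIa₂.mul_prod hIb₁).add (hIb₁.mul_prod hIa₂)
  rw [integral_sub hP hQ, integral_add (hIa₁.mul_prod hIb₂) (hIb₂.mul_prod hIa₁),
    integral_add (hIa₂.mul_prod hIb₁) (hIb₁.mul_prod hIa₂), h1, h2, h3, h4] at key
  nlinarith [key]

theorem stmt_6 (f : ℝ → ℝ) (hfc : ContinuousOn f (Set.Icc 0 2))
    (hfnn : ∀ v ∈ Set.Icc (0:ℝ) 2, 0 ≤ f v)
    (hfne : ∃ v ∈ Set.Icc (0:ℝ) 2, f v ≠ 0)
    (F : ℂ → ℂ) (hF : ∀ z, F z = ∫ v in (0:ℝ)..2, Complex.exp (-z * (v:ℂ)) * (f v : ℂ))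
    (t : ℝ) (ht : |t| ≤ Real.pi / 2) :
    Monotone (fun x : ℝ => (F (x + t * Complex.I)).re / (F (x : ℂ)).re) := by
  have hre : ∀ x : ℝ, (F (↑x + ↑t * Complex.I)).re
      = ∫ v in Set.Ioc (0:ℝ) 2, Real.cos (t*v) * Real.exp (-x*v) * f v := by
    intro x; rw [hF]; exact aux_re f hfc x t
  have hre0 : ∀ x : ℝ, (F (x:ℂ)).re
      = ∫ v in Set.Ioc (0:ℝ) 2, Real.exp (-x*v) * f v := by
    intro x
    have hx : (x:ℂ) = ↑x + ↑(0:ℝ) * Complex.I := by simp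
    rw [hF, hx]
    rw [aux_re f hfc x 0]
    simp only [zero_mul, Real.cos_zero, one_mul]
  intro x₁ x₂ hx
  simp only
  rw [hre, hre, hre0, hre0, div_le_div_iff₀ (aux_pos f hfc hfnn hfne x₁)
    (aux_pos f hfc hfnn hfne x₂)]
  exact aux_main f hfc hfnn t x₁ x₂ ht hx
end

section
/- Let f : [0,2] → ℝ be continuous, nonnegative, not identically zero, k(v) = f(v)e^{-xv}, h(u,x) = ∫₀^u k(v)dv, F(x) = h(2,x), and q_u(x) = h(u,x)/F(x). Then for every u ∈ [0,2], the function x ↦ q_u(x) is monotonically increasing; equivalently F(x)² (d/dx) q_u(x) = ∫_u² k(v)v dv · ∫₀^u k(y)dy − ∫_u² k(y)dy · ∫₀^u k(v)v dv ≥ 0. -/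
open MeasureTheory intervalIntegral Set

private lemma kInt (f : ℝ → ℝ) (hfc : ContinuousOn f (Set.Icc 0 2)) (x a b : ℝ)
    (ha : a ∈ Set.Icc (0:ℝ) 2) (hb : b ∈ Set.Icc (0:ℝ) 2) :
    IntervalIntegrable (fun v => f v * Real.exp (-x * v)) volume a b := by
  apply ContinuousOn.intervalIntegrable
  exact (hfc.mono (Set.uIcc_subset_Icc ha hb)).mul
    (Real.continuous_exp.comp (continuous_const.mul continuous_id)).continuousOn

private lemma Fpos (f : ℝ → ℝ) (hfc : ContinuousOn f (Set.Icc 0 2))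
    (hfnn : ∀ v ∈ Set.Icc (0:ℝ) 2, 0 ≤ f v)
    (hfne : ∃ v ∈ Set.Icc (0:ℝ) 2, f v ≠ 0) (x : ℝ) :
    0 < ∫ v in (0:ℝ)..2, f v * Real.exp (-x * v) := by
  obtain ⟨v₀, hv₀, hne⟩ := hfne
  have hpos : 0 < f v₀ := lt_of_le_of_ne (hfnn v₀ hv₀) (Ne.symm hne)
  have hcw : ContinuousWithinAt f (Set.Icc 0 2) v₀ := hfc v₀ hv₀
  rw [Metric.continuousWithinAt_iff] at hcw
  obtain ⟨δ, hδ, hball⟩ := hcw (f v₀) hpos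
  set a := max 0 (v₀ - δ) with ha
  set b := min 2 (v₀ + δ) with hb
  have hab : a < b :=
    lt_min (max_lt (by norm_num) (by linarith [hv₀.2]))
      (max_lt (by linarith [hv₀.1]) (by linarith))
  have hsub : Set.Ioo a b ⊆ Function.support (fun v => f v * Real.exp (-x * v)) ∩ Set.Ioc 0 2 := by
    intro w hw
    have hw2 : w ∈ Set.Icc (0:ℝ) 2 :=
      ⟨le_of_lt (lt_of_le_of_lt (le_max_left _ _) hw.1), le_of_lt (lt_of_lt_of_le hw.2 (min_le_left _ _))⟩
    have hdist : dist w v₀ < δ := by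
      rw [Real.dist_eq, abs_lt]
      have h1 := lt_of_lt_of_le hw.2 (min_le_right 2 (v₀ + δ))
      have h2 := lt_of_le_of_lt (le_max_right 0 (v₀ - δ)) hw.1
      constructor <;> linarith
    have := hball hw2 hdist
    rw [Real.dist_eq, abs_lt] at this
    have hfw : 0 < f w := by linarith
    constructor
    · exact Function.mem_support.mpr (ne_of_gt (mul_pos hfw (Real.exp_pos _)))
    · exact ⟨lt_of_le_of_lt (le_max_left _ _) hw.1, hw2.2⟩
  rw [intervalIntegral.integral_pos_iff_support_of_nonneg_ae' ?_ (kInt f hfc x 0 2 (by norm_num) (by norm_num))]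
  · refine ⟨by norm_num, lt_of_lt_of_le ?_ (measure_mono hsub)⟩
    rw [Real.volume_Ioo]; exact ENNReal.ofReal_pos.mpr (by linarith)
  · rw [Set.uIoc_of_le (by norm_num : (0:ℝ) ≤ 2)]
    refine (ae_restrict_iff' measurableSet_Ioc).mpr (ae_of_all _ fun w hw => ?_)
    exact mul_nonneg (hfnn w ⟨le_of_lt hw.1, hw.2⟩) (Real.exp_pos _).le

theorem stmt_7 (f : ℝ → ℝ) (hfc : ContinuousOn f (Set.Icc 0 2))
    (hfnn : ∀ v ∈ Set.Icc (0:ℝ) 2, 0 ≤ f v)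
    (hfne : ∃ v ∈ Set.Icc (0:ℝ) 2, f v ≠ 0)
    (u : ℝ) (hu : u ∈ Set.Icc (0:ℝ) 2) :
    Monotone (fun x : ℝ =>
      (∫ v in (0:ℝ)..u, f v * Real.exp (-x * v)) /
      (∫ v in (0:ℝ)..2, f v * Real.exp (-x * v))) := by
  have h02 : (0:ℝ) ∈ Set.Icc (0:ℝ) 2 := by norm_num
  have h22 : (2:ℝ) ∈ Set.Icc (0:ℝ) 2 := by norm_num
  intro x y hxy
  simp only
  set A := ∫ v in (0:ℝ)..u, f v * Real.exp (-x * v) with hA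
  set C := ∫ v in (0:ℝ)..u, f v * Real.exp (-y * v) with hC
  set B := ∫ v in u..2, f v * Real.exp (-x * v) with hB
  set D := ∫ v in u..2, f v * Real.exp (-y * v) with hD
  have hsplitx : (∫ v in (0:ℝ)..2, f v * Real.exp (-x * v)) = A + B :=
    (intervalIntegral.integral_add_adjacent_intervals (kInt f hfc x 0 u h02 hu)
      (kInt f hfc x u 2 hu h22)).symm
  have hsplity : (∫ v in (0:ℝ)..2, f v * Real.exp (-y * v)) = C + D :=
    (intervalIntegral.integral_add_adjacent_intervals (kInt f hfc y 0 u h02 hu)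
      (kInt f hfc y u 2 hu h22)).symm
  have hFx : 0 < A + B := hsplitx ▸ Fpos f hfc hfnn hfne x
  have hFy : 0 < C + D := hsplity ▸ Fpos f hfc hfnn hfne y
  -- nonnegativity of each piece
  have hnn : ∀ (z a b : ℝ), a ∈ Set.Icc (0:ℝ) 2 → b ∈ Set.Icc (0:ℝ) 2 → a ≤ b →
      0 ≤ ∫ v in a..b, f v * Real.exp (-z * v) := by
    intro z a b ha hb hab
    apply intervalIntegral.integral_nonneg hab
    intro w hw
    exact mul_nonneg (hfnn w ⟨le_trans ha.1 hw.1, le_trans hw.2 hb.2⟩) (Real.exp_pos _).le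
  have hAnn : 0 ≤ A := hnn x 0 u h02 hu hu.1
  have hCnn : 0 ≤ C := hnn y 0 u h02 hu hu.1
  have hBnn : 0 ≤ B := hnn x u 2 hu h22 hu.2
  have hDnn : 0 ≤ D := hnn y u 2 hu h22 hu.2
  -- key inequalities
  have hAC : A ≤ Real.exp ((y - x) * u) * C := by
    rw [hA, hC, ← intervalIntegral.integral_const_mul]
    apply intervalIntegral.integral_mono_on hu.1 (kInt f hfc x 0 u h02 hu)
      (((kInt f hfc y 0 u h02 hu).const_mul _))
    intro w hw
    rw [mul_comm (Real.exp _) _, mul_assoc]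
    apply mul_le_mul_of_nonneg_left _ (hfnn w ⟨hw.1, le_trans hw.2 hu.2⟩)
    rw [← Real.exp_add, Real.exp_le_exp]
    nlinarith [hw.2, sub_nonneg.mpr hxy]
  have hDB : D ≤ Real.exp (-((y - x) * u)) * B := by
    rw [hD, hB, ← intervalIntegral.integral_const_mul]
    apply intervalIntegral.integral_mono_on hu.2 (kInt f hfc y u 2 hu h22)
      (((kInt f hfc x u 2 hu h22).const_mul _))
    intro w hw
    rw [mul_comm (Real.exp _) _, mul_assoc]
    apply mul_le_mul_of_nonneg_left _ (hfnn w ⟨le_trans hu.1 hw.1, hw.2⟩)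
    rw [← Real.exp_add, Real.exp_le_exp]
    nlinarith [hw.1, sub_nonneg.mpr hxy]
  have hkey : A * D ≤ C * B := by
    calc A * D ≤ (Real.exp ((y - x) * u) * C) * (Real.exp (-((y - x) * u)) * B) := by
          apply mul_le_mul hAC hDB hDnn
          positivity
      _ = (Real.exp ((y - x) * u) * Real.exp (-((y - x) * u))) * (C * B) := by ring
      _ = C * B := by rw [← Real.exp_add, add_neg_cancel, Real.exp_zero, one_mul]
  rw [hsplitx, hsplity, div_le_div_iff₀ hFx hFy]
  nlinarith
end

section
/- Let ω > 0, φ ≥ 0, and define B_{φ,ω}(y) = (φ/2)·(1 - e^{-2ωy})/y + ((1 - e^{-ωy})/y)². Then B_{φ,ω} is monotonically decreasing on (0,∞), and y ↦ e^{ωy} B_{φ,ω}(y) is monotonically increasing on (0,∞). Consequently, for any Λ > 0: if λ ≥ Λ then B_{φ,ω}(λ) ≤ B_{φ,ω}(Λ), and if 0 < λ ≤ Λ then e^{-ω(Λ-λ)} B_{φ,ω}(λ) ≤ B_{φ,ω}(Λ). -/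
lemma h_anti : AntitoneOn (fun t : ℝ => (1 - Real.exp (-t)) / t) (Set.Ioi 0) := by
  apply antitoneOn_of_deriv_nonpos (convex_Ioi 0)
  · exact ContinuousOn.div ((continuous_const.sub (Real.continuous_exp.comp continuous_neg)).continuousOn) continuousOn_id (fun x hx => ne_of_gt hx)
  · rw [interior_Ioi]
    intro x hx
    exact ((((hasDerivAt_id x).neg.exp.const_sub 1).div (hasDerivAt_id x) (ne_of_gt hx)).differentiableAt).differentiableWithinAt
  · rw [interior_Ioi]
    intro x hx
    have hd : HasDerivAt (fun t : ℝ => (1 - Real.exp (-t)) / t)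
        ((-(Real.exp (-x) * -1) * x - (1 - Real.exp (-x)) * 1) / x ^ 2) x :=
      (((hasDerivAt_id x).neg.exp.const_sub 1).div (hasDerivAt_id x) (ne_of_gt hx))
    rw [hd.deriv]
    have h1 : x + 1 ≤ Real.exp x := Real.add_one_le_exp x
    have h2 : Real.exp (-x) * (x + 1) ≤ 1 := by
      have := mul_le_mul_of_nonneg_left h1 (Real.exp_pos (-x)).le
      rwa [← Real.exp_add, neg_add_cancel, Real.exp_zero] at this
    apply div_nonpos_of_nonpos_of_nonneg _ (sq_nonneg x)
    nlinarith

lemma sinh_le (x : ℝ) (hx : 0 ≤ x) : Real.sinh x ≤ x * Real.cosh x := by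
  have hmono : MonotoneOn (fun t : ℝ => t * Real.cosh t - Real.sinh t) (Set.Ici 0) := by
    apply monotoneOn_of_deriv_nonneg (convex_Ici 0)
    · exact (continuous_id.mul Real.continuous_cosh).sub Real.continuous_sinh |>.continuousOn
    · intro t ht
      exact (((hasDerivAt_id t).mul (Real.hasDerivAt_cosh t)).sub (Real.hasDerivAt_sinh t)).differentiableAt.differentiableWithinAt
    · rw [interior_Ici]
      intro t ht
      have hd : HasDerivAt (fun t : ℝ => t * Real.cosh t - Real.sinh t)
          ((1 * Real.cosh t + t * Real.sinh t) - Real.cosh t) t :=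
        ((hasDerivAt_id t).mul (Real.hasDerivAt_cosh t)).sub (Real.hasDerivAt_sinh t)
      rw [hd.deriv]
      have h0 := Real.sinh_nonneg_iff.mpr (le_of_lt (Set.mem_Ioi.mp ht))
      nlinarith [mul_nonneg (le_of_lt (Set.mem_Ioi.mp ht)) h0]
  have := hmono (Set.self_mem_Ici) hx hx
  simp at this
  linarith

lemma S_mono : MonotoneOn (fun t : ℝ => Real.sinh t / t) (Set.Ioi 0) := by
  apply monotoneOn_of_deriv_nonneg (convex_Ioi 0)
  · exact ContinuousOn.div Real.continuous_sinh.continuousOn continuousOn_id (fun x hx => ne_of_gt hx)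
  · rw [interior_Ioi]
    intro x hx
    exact ((Real.hasDerivAt_sinh x).div (hasDerivAt_id x) (ne_of_gt hx)).differentiableAt.differentiableWithinAt
  · rw [interior_Ioi]
    intro x hx
    have hd : HasDerivAt (fun t : ℝ => Real.sinh t / t)
        ((Real.cosh x * x - Real.sinh x * 1) / x ^ 2) x :=
      (Real.hasDerivAt_sinh x).div (hasDerivAt_id x) (ne_of_gt hx)
    rw [hd.deriv]
    apply div_nonneg _ (sq_nonneg x)
    have := sinh_le x (le_of_lt hx)
    nlinarith

lemma h_ineq (a x y : ℝ) (ha : 0 < a) (hx : 0 < x) (hxy : x ≤ y) :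
    (1 - Real.exp (-(a * y))) / y ≤ (1 - Real.exp (-(a * x))) / x := by
  have hy : 0 < y := lt_of_lt_of_le hx hxy
  have := h_anti (Set.mem_Ioi.mpr (mul_pos ha hx)) (Set.mem_Ioi.mpr (mul_pos ha hy))
    (mul_le_mul_of_nonneg_left hxy ha.le)
  simp only at this
  have h1 : (1 - Real.exp (-(a * y))) / y = a * ((1 - Real.exp (-(a * y))) / (a * y)) := by
    field_simp
  have h2 : (1 - Real.exp (-(a * x))) / x = a * ((1 - Real.exp (-(a * x))) / (a * x)) := by
    field_simp
  rw [h1, h2]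
  exact mul_le_mul_of_nonneg_left this ha.le

lemma h_nonneg (a x : ℝ) (ha : 0 ≤ a) (hx : 0 < x) :
    0 ≤ (1 - Real.exp (-(a * x))) / x := by
  apply div_nonneg _ hx.le
  have : Real.exp (-(a * x)) ≤ 1 := Real.exp_le_one_iff.mpr (by nlinarith)
  linarith

lemma sinh_ineq (a x y : ℝ) (ha : 0 < a) (hx : 0 < x) (hxy : x ≤ y) :
    Real.sinh (a * x) / x ≤ Real.sinh (a * y) / y := by
  have hy : 0 < y := lt_of_lt_of_le hx hxy
  have := S_mono (Set.mem_Ioi.mpr (mul_pos ha hx)) (Set.mem_Ioi.mpr (mul_pos ha hy))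
    (mul_le_mul_of_nonneg_left hxy ha.le)
  simp only at this
  have h1 : Real.sinh (a * x) / x = a * (Real.sinh (a * x) / (a * x)) := by field_simp
  have h2 : Real.sinh (a * y) / y = a * (Real.sinh (a * y) / (a * y)) := by field_simp
  rw [h1, h2]
  exact mul_le_mul_of_nonneg_left this ha.le

theorem stmt_10 (φ ω : ℝ) (hφ : 0 ≤ φ) (hω : 0 < ω) (B : ℝ → ℝ)
    (hB : ∀ y, B y = φ / 2 * ((1 - Real.exp (-(2 * ω * y))) / y) +
      ((1 - Real.exp (-(ω * y))) / y)^2) :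
    AntitoneOn B (Set.Ioi 0) ∧
    MonotoneOn (fun y => Real.exp (ω * y) * B y) (Set.Ioi 0) ∧
    (∀ Λ lam : ℝ, 0 < Λ → Λ ≤ lam → B lam ≤ B Λ) ∧
    (∀ Λ lam : ℝ, 0 < lam → lam ≤ Λ → Real.exp (-(ω * (Λ - lam))) * B lam ≤ B Λ) := by
  have key : ∀ x : ℝ, 0 < x → Real.exp (ω * x) * B x
      = φ * (Real.sinh (ω * x) / x) + (2 * (Real.sinh (ω / 2 * x) / x)) ^ 2 := by
    intro x hx
    rw [hB, Real.sinh_eq, Real.sinh_eq]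
    have e1 : Real.exp (ω * x) = Real.exp (ω / 2 * x) * Real.exp (ω / 2 * x) := by
      rw [← Real.exp_add]; ring_nf
    have e2 : Real.exp (-(2 * ω * x)) = Real.exp (-(ω * x)) * Real.exp (-(ω * x)) := by
      rw [← Real.exp_add]; ring_nf
    have e3 : Real.exp (ω * x) * Real.exp (-(ω * x)) = 1 := by
      rw [← Real.exp_add]; simp
    have e5 : Real.exp (ω / 2 * x) * Real.exp (-(ω * x)) = Real.exp (-(ω / 2 * x)) := by
      rw [← Real.exp_add]; ring_nf
    have i1 : Real.exp (ω * x) * (1 - Real.exp (-(2 * ω * x)))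
        = Real.exp (ω * x) - Real.exp (-(ω * x)) := by
      rw [e2]; linear_combination (-Real.exp (-(ω * x))) * e3
    have i2 : Real.exp (ω * x) * (1 - Real.exp (-(ω * x)))^2
        = (Real.exp (ω / 2 * x) - Real.exp (-(ω / 2 * x)))^2 := by
      linear_combination (1 - Real.exp (-(ω * x)))^2 * e1 -
        (2 * Real.exp (ω / 2 * x) - Real.exp (ω / 2 * x) * Real.exp (-(ω * x))
          - Real.exp (-(ω / 2 * x))) * e5
    calc Real.exp (ω * x) * (φ / 2 * ((1 - Real.exp (-(2 * ω * x))) / x) +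
          ((1 - Real.exp (-(ω * x))) / x)^2)
        = φ / 2 * ((Real.exp (ω * x) * (1 - Real.exp (-(2 * ω * x)))) / x) +
          (Real.exp (ω * x) * (1 - Real.exp (-(ω * x)))^2) / x^2 := by ring
      _ = φ * ((Real.exp (ω * x) - Real.exp (-(ω * x))) / 2 / x) +
          (2 * ((Real.exp (ω / 2 * x) - Real.exp (-(ω / 2 * x))) / 2 / x)) ^ 2 := by
          rw [i1, i2]; ring
  have anti : AntitoneOn B (Set.Ioi 0) := by
    intro x hx y hy hxy
    simp only [Set.mem_Ioi] at hx hy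
    rw [hB, hB]
    have A1 := h_ineq (2 * ω) x y (by linarith) hx hxy
    have A2 := h_ineq ω x y hω hx hxy
    have A3 := h_nonneg ω y hω.le hy
    gcongr
  have mono : MonotoneOn (fun y => Real.exp (ω * y) * B y) (Set.Ioi 0) := by
    intro x hx y hy hxy
    simp only [Set.mem_Ioi] at hx hy
    simp only
    rw [key x hx, key y hy]
    have M1 := sinh_ineq ω x y hω hx hxy
    have M2 := sinh_ineq (ω / 2) x y (by linarith) hx hxy
    have M3 : 0 ≤ Real.sinh (ω / 2 * x) / x :=
      div_nonneg (Real.sinh_nonneg_iff.mpr (by positivity)) (le_of_lt hx)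
    gcongr
  refine ⟨anti, mono, ?_, ?_⟩
  · intro Λ lam hΛ hle
    exact anti (Set.mem_Ioi.mpr hΛ) (Set.mem_Ioi.mpr (lt_of_lt_of_le hΛ hle)) hle
  · intro Λ lam hlam hle
    have hΛ : 0 < Λ := lt_of_lt_of_le hlam hle
    have h2 := mono (Set.mem_Ioi.mpr hlam) (Set.mem_Ioi.mpr hΛ) hle
    simp only at h2
    have hmul := mul_le_mul_of_nonneg_left h2 (Real.exp_pos (-(ω * Λ))).le
    have e3 : Real.exp (-(ω * Λ)) * Real.exp (ω * Λ) = 1 := by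
      rw [← Real.exp_add]; simp
    have e4 : Real.exp (-(ω * (Λ - lam))) = Real.exp (-(ω * Λ)) * Real.exp (ω * lam) := by
      rw [← Real.exp_add]; ring_nf
    rw [e4]
    calc Real.exp (-(ω * Λ)) * Real.exp (ω * lam) * B lam
        = Real.exp (-(ω * Λ)) * (Real.exp (ω * lam) * B lam) := by ring
      _ ≤ Real.exp (-(ω * Λ)) * (Real.exp (ω * Λ) * B Λ) := hmul
      _ = B Λ := by rw [← mul_assoc, e3, one_mul]
end

section
/- Fix λ > 0 and ω > 0. Define f₁(t) = sinh((ω - t)λ) for 0 ≤ t ≤ ω and f₁(t) = 0 for t ≥ ω; let F₁(z) = ∫₀^∞ e^{-zt} f₁(t) dt and F₂(z) = ((1-e^{-ωz})/z)². Then for every complex z with Re z ≥ 0, Re F₁(z) ≥ (λ e^{ωλ}/2)·|F₂(λ + z)|. -/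
set_option maxHeartbeats 2000000

lemma hb_alg (l ω x y L E c s : ℝ) (hl : 0 < l) (hω : 0 < ω) (hx : 0 ≤ x)
    (hL1 : 1 ≤ L) (hE0 : 0 < E) (hE1 : E ≤ 1)
    (hA1 : 2*(l*ω)*L ≤ L^2 - 1) (hA2 : 2*(x*ω)*E ≤ 1 - E^2)
    (hRq : 4*(1-L*E)^2 ≤ (x-l)^2*ω^2*(1+L*E)^2)
    (hc2 : 1 - c ≤ (ω*y)^2/2) (hcs : s^2 + c^2 = 1) :
    4*x*l*((x-l)*(1-L*E*c) + L*E*y*s) ≤ (x*(L^2-1)+l*(1-E^2))*((x-l)^2+y^2) := by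
  have hLE : 1 + L*E ≤ L + E := by nlinarith
  have hAge : 2*x*l*ω*(L+E) ≤ x*(L^2-1)+l*(1-E^2) := by
    have t1 := mul_le_mul_of_nonneg_left hA1 hx
    have t2 := mul_le_mul_of_nonneg_left hA2 hl.le
    nlinarith
  set R := L*E with hRdef
  set A := x*(L^2-1)+l*(1-E^2) with hAdef
  set q := x - l with hqdef
  set D2 := (x-l)^2+y^2 with hD2def
  have hR0 : 0 < R := mul_pos (by linarith) hE0
  have hD2eq : q^2 + y^2 = D2 := by rw [hD2def, hqdef]
  set B := q*(1-R*c) + R*y*s with hBdef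
  have hBeq : B = q*(1-R*c) + R*y*s := hBdef
  clear_value R A q D2 B
  clear hRdef hAdef hqdef hD2def
  have hP : (0:ℝ) ≤ 2*x*l*ω*(L+E) := by
    have : (0:ℝ) < L + E := by linarith
    positivity
  have hApos : 0 ≤ A := le_trans hP hAge
  have hD2 : (0:ℝ) ≤ D2 := by rw [← hD2eq]; positivity
  have s1 : (2*x*l*ω*(L+E))^2 * q^2 ≤ A^2 * q^2 :=
    mul_le_mul_of_nonneg_right (pow_le_pow_left₀ hP hAge 2) (sq_nonneg q)
  have s2a : 2*x*l*ω*(1+R) ≤ 2*x*l*ω*(L+E) :=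
    mul_le_mul_of_nonneg_left hLE (by positivity)
  have s2 : (2*x*l*ω*(1+R))^2 * q^2 ≤ (2*x*l*ω*(L+E))^2 * q^2 :=
    mul_le_mul_of_nonneg_right (pow_le_pow_left₀ (by positivity) s2a 2) (sq_nonneg q)
  have s3 : 16*x^2*l^2*(1-R)^2 ≤ (2*x*l*ω*(1+R))^2 * q^2 := by
    have t := mul_le_mul_of_nonneg_left hRq (by positivity : (0:ℝ) ≤ 4*x^2*l^2)
    have e : 4*x^2*l^2*(q^2*ω^2*(1+R)^2) = (2*x*l*ω*(1+R))^2 * q^2 := by ring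
    have e2 : 4*x^2*l^2*(4*(1-R)^2) = 16*x^2*l^2*(1-R)^2 := by ring
    linarith
  have e1 : 16*x^2*l^2*(1-R)^2 ≤ A^2*q^2 := by linarith
  have t1 : (2*x*l*ω*(1+R))^2 ≤ A^2 := pow_le_pow_left₀ (by positivity) (le_trans s2a hAge) 2
  have t2 : 16*x^2*l^2*ω^2*R ≤ (2*x*l*ω*(1+R))^2 := by
    have u : 4*R ≤ (1+R)^2 := by nlinarith [sq_nonneg (1-R)]
    have v := mul_le_mul_of_nonneg_left u (by positivity : (0:ℝ) ≤ 4*x^2*l^2*ω^2)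
    have e : 4*x^2*l^2*ω^2*(4*R) = 16*x^2*l^2*ω^2*R := by ring
    have e2 : 4*x^2*l^2*ω^2*((1+R)^2) = (2*x*l*ω*(1+R))^2 := by ring
    linarith
  have t3 : 16*x^2*l^2*ω^2*R*y^2 ≤ A^2*y^2 :=
    mul_le_mul_of_nonneg_right (le_trans t2 t1) (sq_nonneg y)
  have t4 : 16*x^2*l^2*(2*R*(1-c)) ≤ 16*x^2*l^2*ω^2*R*y^2 := by
    have u : 2*R*(1-c) ≤ 2*R*((ω*y)^2/2) := mul_le_mul_of_nonneg_left hc2 (by positivity)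
    have v := mul_le_mul_of_nonneg_left u (by positivity : (0:ℝ) ≤ 16*x^2*l^2)
    have e : 16*x^2*l^2*(2*R*((ω*y)^2/2)) = 16*x^2*l^2*ω^2*R*y^2 := by ring
    linarith
  have e2 : 16*x^2*l^2*(2*R*(1-c)) ≤ A^2*y^2 := by linarith
  have hMain : 16*x^2*l^2*((1-R)^2 + 2*R*(1-c)) ≤ A^2 * D2 := by
    have e : A^2*q^2 + A^2*y^2 = A^2*D2 := by rw [← hD2eq]; ring
    linarith
  have hCS : B^2 ≤ D2 * ((1-R)^2 + 2*R*(1-c)) := by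
    have e : (1-R*c)^2 + (R*s)^2 = (1-R)^2 + 2*R*(1-c) := by linear_combination (R^2) * hcs
    have cs : B^2 ≤ D2 * ((1-R*c)^2 + (R*s)^2) := by
      rw [hBeq, ← hD2eq]; nlinarith [sq_nonneg (q*(R*s) - y*(1-R*c))]
    rw [e] at cs; exact cs
  have hsq : (4*x*l*B)^2 ≤ (A*D2)^2 := by
    have u : (4*x*l)^2 * B^2 ≤ (4*x*l)^2 * (D2 * ((1-R)^2 + 2*R*(1-c))) :=
      mul_le_mul_of_nonneg_left hCS (by positivity)
    have v : (4*x*l)^2 * (D2 * ((1-R)^2 + 2*R*(1-c))) ≤ (A^2*D2)*D2 := by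
      have w := mul_le_mul_of_nonneg_right hMain hD2
      have e : 16*x^2*l^2*((1-R)^2 + 2*R*(1-c))*D2 = (4*x*l)^2 * (D2 * ((1-R)^2 + 2*R*(1-c))) := by
        ring
      linarith
    have e : (4*x*l)^2 * B^2 = (4*x*l*B)^2 := by ring
    have e2 : (A^2*D2)*D2 = (A*D2)^2 := by ring
    linarith
  have hfin : 4*x*l*B ≤ A * D2 := by
    nlinarith [mul_nonneg hApos hD2]
  exact hfin

lemma hb_tanh {t : ℝ} (ht : 0 ≤ t) : 2 * (1 - Real.exp (-t)) ≤ t * (1 + Real.exp (-t)) := by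
  have hd : ∀ u : ℝ, HasDerivAt (fun v => v*(1+Real.exp (-v)) - 2*(1-Real.exp (-v)))
      (1 - (1+u)*Real.exp (-u)) u := by
    intro u
    have he : HasDerivAt (fun v:ℝ => Real.exp (-v)) (-Real.exp (-u)) u := by
      have := (hasDerivAt_neg u).exp
      simpa using this
    have h := ((hasDerivAt_id u).mul ((hasDerivAt_const u (1:ℝ)).add he)).sub
      (((hasDerivAt_const u (1:ℝ)).sub he).const_mul 2)
    exact h.congr_deriv (by simp [id]; ring)
  have hmono : MonotoneOn (fun v => v*(1+Real.exp (-v)) - 2*(1-Real.exp (-v))) (Set.Ici 0) := by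
    apply monotoneOn_of_deriv_nonneg (convex_Ici 0)
    · exact Continuous.continuousOn (by continuity)
    · exact fun u _ => (hd u).differentiableAt.differentiableWithinAt
    · intro u _
      rw [(hd u).deriv]
      have h1 : Real.exp (-u) * Real.exp u = 1 := by rw [← Real.exp_add]; simp
      nlinarith [Real.add_one_le_exp u, Real.exp_pos u, Real.exp_pos (-u)]
  have := hmono (Set.self_mem_Ici) (Set.mem_Ici.mpr ht) ht
  simp only [neg_zero, Real.exp_zero, zero_mul, mul_one, sub_self, mul_zero] at this
  nlinarith [this]

lemma hb_sinh {a : ℝ} (ha : 0 ≤ a) : 2 * a * Real.exp a ≤ Real.exp (2*a) - 1 := by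
  have h := Real.self_le_sinh_iff.mpr ha
  rw [Real.sinh_eq] at h
  nlinarith [Real.exp_pos (-a),
    (by rw [← Real.exp_add]; ring_nf : Real.exp a * Real.exp a = Real.exp (2*a)),
    (by rw [← Real.exp_add]; simp : Real.exp a * Real.exp (-a) = 1)]

lemma hb_key (l ω x y : ℝ) (hl : 0 < l) (hω : 0 < ω) (hx : 0 ≤ x) :
    4*x*l*((x-l)*(1 - Real.exp (l*ω)*Real.exp (-(x*ω))*Real.cos (ω*y))
        + Real.exp (l*ω)*Real.exp (-(x*ω))*y*Real.sin (ω*y))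
      ≤ (x*((Real.exp (l*ω))^2 - 1) + l*(1 - (Real.exp (-(x*ω)))^2)) * ((x-l)^2 + y^2) := by
  have hE0 : 0 < Real.exp (-(x*ω)) := Real.exp_pos _
  have hL0 : 0 < Real.exp (l*ω) := Real.exp_pos _
  apply hb_alg l ω x y _ _ _ _ hl hω hx
  · exact Real.one_le_exp (by positivity)
  · exact hE0
  · exact Real.exp_le_one_iff.mpr (by nlinarith)
  · have := hb_sinh (a := l*ω) (by positivity)
    have h2 : Real.exp (2*(l*ω)) = Real.exp (l*ω)^2 := by
      rw [two_mul, Real.exp_add, sq]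
    linarith [h2 ▸ this]
  · have := hb_sinh (a := x*ω) (by positivity)
    have h2 : Real.exp (2*(x*ω)) * Real.exp (-(x*ω))^2 = 1 := by
      rw [sq, ← Real.exp_add, ← Real.exp_add, show 2*(x*ω) + (-(x*ω) + -(x*ω)) = 0 by ring,
        Real.exp_zero]
    have h3 : Real.exp (x*ω) * Real.exp (-(x*ω)) = 1 := by
      rw [← Real.exp_add, show x*ω + -(x*ω) = 0 by ring, Real.exp_zero]
    nlinarith [Real.exp_pos (x*ω), Real.exp_pos (2*(x*ω)), sq_nonneg (Real.exp (-(x*ω)))]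
  · set R := Real.exp (l*ω) * Real.exp (-(x*ω)) with hRdef
    have hRe : R = Real.exp ((l-x)*ω) := by rw [hRdef, ← Real.exp_add]; ring_nf
    rcases le_or_gt l x with h | h
    · have ht : (0:ℝ) ≤ (x-l)*ω := mul_nonneg (by linarith) hω.le
      have h2 := hb_tanh ht
      have he : Real.exp (-((x-l)*ω)) = R := by rw [hRe]; ring_nf
      rw [he] at h2
      have hR1 : R ≤ 1 := by rw [hRe]; exact Real.exp_le_one_iff.mpr (by nlinarith)
      nlinarith [sq_nonneg ((x-l)*ω*(1+R) - 2*(1-R)), mul_pos hL0 hE0]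
    · have ht : (0:ℝ) ≤ (l-x)*ω := by nlinarith
      have h2 := hb_tanh ht
      have he : Real.exp (-((l-x)*ω)) * R = 1 := by
        rw [hRe, ← Real.exp_add, show -((l-x)*ω) + (l-x)*ω = 0 by ring, Real.exp_zero]
      have hR0 : 0 < R := mul_pos hL0 hE0
      have h3 : 2*(R-1) ≤ (l-x)*ω*(R+1) := by nlinarith [Real.exp_pos (-((l-x)*ω))]
      have hR1 : 1 ≤ R := by
        rw [hRe]; exact Real.one_le_exp (by nlinarith)
      nlinarith [sq_nonneg ((l-x)*ω*(1+R) - 2*(R-1))]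
  · have := Real.one_sub_sq_div_two_le_cos (x := ω*y); nlinarith
  · exact Real.sin_sq_add_cos_sq (ω*y)

theorem stmt_11 (l ω : ℝ) (hl : 0 < l) (hω : 0 < ω)
    (F₁ F₂ : ℂ → ℂ)
    (hF₁ : ∀ z, F₁ z = ∫ t in (0:ℝ)..ω, Complex.exp (-z * (t:ℂ)) *
      ((Real.sinh ((ω - t) * l) : ℝ) : ℂ))
    (hF₂ : ∀ z, F₂ z = ((1 - Complex.exp (-(ω:ℂ) * z)) / z)^2)
    (z : ℂ) (hz : 0 ≤ z.re) :
    l * Real.exp (ω * l) / 2 * ‖F₂ ((l:ℂ) + z)‖ ≤ (F₁ z).re := by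
  have hInt : ∀ c : ℂ, IntervalIntegrable (fun t : ℝ => Complex.exp (c * t))
      MeasureTheory.volume 0 ω :=
    fun c => (Complex.continuous_exp.comp
      (continuous_const.mul Complex.continuous_ofReal)).intervalIntegrable _ _
  have hint : ∀ t : ℝ, Complex.exp (-z * (t:ℂ)) * ((Real.sinh ((ω - t) * l) : ℝ) : ℂ)
      = (Complex.exp ((l:ℂ)*(ω:ℂ)) * Complex.exp ((-z - (l:ℂ)) * t)
        - Complex.exp (-((l:ℂ)*(ω:ℂ))) * Complex.exp (((l:ℂ) - z) * t)) / 2 := by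
    intro t
    rw [Real.sinh_eq]
    push_cast
    rw [← mul_div_assoc, mul_sub, ← Complex.exp_add, ← Complex.exp_add,
        ← Complex.exp_add, ← Complex.exp_add]
    congr 3 <;> ring
  have hc₁ : (-z - (l:ℂ)) ≠ 0 := by
    intro h
    have := congrArg Complex.re h
    simp at this
    linarith
  set x := z.re with hxdef
  set y := z.im with hydef
  set L := Real.exp (l*ω) with hLdef
  set E := Real.exp (-(x*ω)) with hEdef
  set c := Real.cos (ω*y) with hcdef
  set s := Real.sin (ω*y) with hsdef
  have hLpos : 0 < L := Real.exp_pos _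
  have hEpos : 0 < E := Real.exp_pos _
  have hL0 : L ≠ 0 := hLpos.ne'
  have hxl : (0:ℝ) < x + l := by linarith
  have hD1 : (0:ℝ) < (x+l)^2 + y^2 := by positivity
  have hD1' : ((x+l)^2 + y^2) ≠ 0 := hD1.ne'
  have hcs : s^2 + c^2 = 1 := Real.sin_sq_add_cos_sq (ω*y)
  -- F₂ side
  have hF2abs : ‖F₂ ((l:ℂ) + z)‖
      = ((1 - (E/L)*c)^2 + ((E/L)*s)^2) / ((x+l)^2 + y^2) := by
    rw [hF₂]
    rw [norm_pow, Complex.sq_norm, Complex.normSq_div]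
    simp only [Complex.normSq_apply, Complex.exp_re, Complex.exp_im, Complex.mul_re,
      Complex.mul_im, Complex.add_re, Complex.add_im, Complex.sub_re, Complex.sub_im,
      Complex.ofReal_re, Complex.ofReal_im, Complex.one_re, Complex.one_im,
      Complex.neg_re, Complex.neg_im, ← hxdef, ← hydef]
    ring_nf
    rw [Real.cos_neg, Real.sin_neg, show Real.exp (-(ω*l) - ω*x) = E/L by
      rw [hEdef, hLdef, ← Real.exp_sub]; ring_nf]
    field_simp
    ring
  rw [hF2abs, show Real.exp (ω*l) = L by rw [hLdef, mul_comm]]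
  by_cases hzl : z = (l:ℂ)
  · -- special point z = l
    have hx_l : x = l := by rw [hxdef, hzl, Complex.ofReal_re]
    have hy0 : y = 0 := by rw [hydef, hzl, Complex.ofReal_im]
    have hc1 : c = 1 := by rw [hcdef, hy0, mul_zero, Real.cos_zero]
    have hs0 : s = 0 := by rw [hsdef, hy0, mul_zero, Real.sin_zero]
    have hEL : E = 1/L := by
      rw [hEdef, hLdef, hx_l, Real.exp_neg, one_div, mul_comm]
    -- compute F₁ l
    have hc2l : (-z - (l:ℂ)) = ((-(2*l) : ℝ) : ℂ) := by rw [hzl]; push_cast; ring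
    have hI : F₁ z = (Complex.exp ((l:ℂ)*(ω:ℂ))
          * ((Complex.exp ((-z-(l:ℂ))*(ω:ℂ)) - 1)/(-z-(l:ℂ)))
        - Complex.exp (-((l:ℂ)*(ω:ℂ))) * (ω:ℂ))/2 := by
      rw [hF₁ z]
      rw [intervalIntegral.integral_congr (g := fun t : ℝ =>
        (Complex.exp ((l:ℂ)*(ω:ℂ)) * Complex.exp ((-z - (l:ℂ)) * t)
          - Complex.exp (-((l:ℂ)*(ω:ℂ))) * Complex.exp (((l:ℂ) - z) * t))/2)
        (fun t _ => hint t)]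
      have hz0 : ((l:ℂ) - z) = 0 := by rw [hzl]; ring
      simp only [hz0, zero_mul, Complex.exp_zero, mul_one]
      rw [intervalIntegral.integral_div, intervalIntegral.integral_sub
        ((hInt _).const_mul _) (intervalIntegrable_const),
        intervalIntegral.integral_const_mul, integral_exp_mul_complex hc₁]
      simp
      ring
    have hre : (F₁ z).re
        = (Real.exp (l*ω) * ((1 - Real.exp (-(2*l)*ω))/(2*l)) - ω/Real.exp (l*ω))/2 := by
      rw [hI, hc2l]
      simp only [Complex.div_re, Complex.div_im, Complex.normSq_apply, Complex.exp_re,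
        Complex.exp_im, Complex.mul_re, Complex.mul_im, Complex.add_re, Complex.add_im,
        Complex.sub_re, Complex.sub_im, Complex.ofReal_re, Complex.ofReal_im,
        Complex.one_re, Complex.one_im, Complex.neg_re, Complex.neg_im,
        Complex.re_ofNat, Complex.im_ofNat, Real.cos_zero, Real.sin_zero]
      ring_nf
      simp only [Real.cos_zero, Real.sin_zero, mul_zero, zero_mul, mul_one, one_mul,
        neg_neg, neg_zero, add_zero, zero_add, sub_zero]
      ring_nf
      simp only [Real.exp_neg]
      have h0 : Real.exp (l*ω) ≠ 0 := (Real.exp_pos _).ne'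
      field_simp
      ring
    rw [hre, ← hLdef, hx_l, hy0, hc1, hs0, hEL]
    set E₂ := Real.exp (-(2*l)*ω) with hE2def
    have hE2pos : 0 < E₂ := Real.exp_pos _
    have hE2L : E₂ * L^2 = 1 := by
      rw [hE2def, hLdef, sq, ← Real.exp_add, ← Real.exp_add,
        show -(2*l)*ω + (l*ω + l*ω) = 0 by ring, Real.exp_zero]
    have hsinh : 4*(l*ω) ≤ L^2 - E₂ := by
      have h := Real.self_le_sinh_iff.mpr (by positivity : (0:ℝ) ≤ 2*(l*ω))
      rw [Real.sinh_eq] at h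
      have e1 : Real.exp (2*(l*ω)) = L^2 := by rw [hLdef, sq, ← Real.exp_add, two_mul]
      have e2 : Real.exp (-(2*(l*ω))) = E₂ := by rw [hE2def]; ring_nf
      rw [e1, e2] at h
      linarith
    have hinv : (1/L)/L = E₂ := by
      rw [div_div, ← sq, eq_comm, eq_div_iff (by positivity)]
      linarith [hE2L]
    rw [hinv]
    rw [← sub_nonneg]
    have hEE : L^2*E₂^2 = E₂ := by linear_combination E₂ * hE2L
    have hid : (L*((1-E₂)/(2*l)) - ω/L)/2 - l*L/2 * (((1-E₂*c)^2 + (E₂*s)^2)/((x+l)^2+y^2))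
        = (2*L^2*(1-E₂) - 4*(l*ω) - L^2*((1-E₂*c)^2 + (E₂*s)^2)) / (8*l*L) := by
      rw [hx_l, hy0]
      field_simp
      ring
    rw [hx_l, hy0, hc1, hs0] at hid
    rw [hid]
    apply div_nonneg _ (by positivity)
    nlinarith [hsinh, hEE]
  · -- generic case
    have hc₂ : ((l:ℂ) - z) ≠ 0 := sub_ne_zero.mpr (fun h => hzl h.symm)
    have hD2 : (0:ℝ) < (x-l)^2 + y^2 := by
      rcases lt_or_ge 0 ((x-l)^2 + y^2) with h | h
      · exact h
      · exfalso; apply hzl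
        have h1 : x = l := by nlinarith [sq_nonneg (x-l), sq_nonneg y]
        have h2 : y = 0 := by nlinarith [sq_nonneg (x-l), sq_nonneg y]
        apply Complex.ext
        · simpa using h1
        · simpa using h2
    have hD2' : ((x-l)^2 + y^2) ≠ 0 := hD2.ne'
    have hI : F₁ z = (Complex.exp ((l:ℂ)*(ω:ℂ))
          * ((Complex.exp ((-z-(l:ℂ))*(ω:ℂ)) - 1)/(-z-(l:ℂ)))
        - Complex.exp (-((l:ℂ)*(ω:ℂ)))
          * ((Complex.exp (((l:ℂ)-z)*(ω:ℂ)) - 1)/((l:ℂ)-z)))/2 := by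
      rw [hF₁ z]
      rw [intervalIntegral.integral_congr (g := fun t : ℝ =>
        (Complex.exp ((l:ℂ)*(ω:ℂ)) * Complex.exp ((-z - (l:ℂ)) * t)
          - Complex.exp (-((l:ℂ)*(ω:ℂ))) * Complex.exp (((l:ℂ) - z) * t)) / 2)
        (fun t _ => hint t)]
      rw [intervalIntegral.integral_div, intervalIntegral.integral_sub
        ((hInt _).const_mul _) ((hInt _).const_mul _),
        intervalIntegral.integral_const_mul, intervalIntegral.integral_const_mul,
        integral_exp_mul_complex hc₁, integral_exp_mul_complex hc₂]
      norm_num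
    have hF1re : (F₁ z).re
        = (((x+l) - (E/L)*((x+l)*c - y*s))*L/((x+l)^2+y^2)
          - ((x-l)*(1-(L*E)*c) + (L*E)*y*s)/(L*((x-l)^2+y^2)))/2 := by
      rw [hI]
      simp only [Complex.div_re, Complex.div_im, Complex.normSq_apply, Complex.exp_re,
        Complex.exp_im, Complex.mul_re, Complex.mul_im, Complex.add_re, Complex.add_im,
        Complex.sub_re, Complex.sub_im, Complex.ofReal_re, Complex.ofReal_im,
        Complex.one_re, Complex.one_im, Complex.neg_re, Complex.neg_im,
        Complex.re_ofNat, Complex.im_ofNat,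
        Real.cos_zero, Real.sin_zero, Real.cos_neg, Real.sin_neg, ← hxdef, ← hydef]
      ring_nf
      simp only [Real.cos_zero, Real.sin_zero, Real.cos_neg, Real.sin_neg, mul_zero, zero_mul,
        mul_one, one_mul, neg_neg, neg_zero, add_zero, zero_add, sub_zero]
      ring_nf
      rw [show Real.exp (-(l*ω) - ω*x) = E/L by rw [hEdef, hLdef, ← Real.exp_sub]; ring_nf,
          show Real.exp (l*ω - ω*x) = L*E by rw [hEdef, hLdef, ← Real.exp_add]; ring_nf,
          show Real.exp (-(l*ω)) = 1/L by rw [hLdef, Real.exp_neg]; ring_nf]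
      field_simp
      ring
    rw [hF1re]
    have hkey := hb_key l ω x y hl hω hz
    rw [← hLdef, ← hEdef, ← hcdef, ← hsdef] at hkey
    have hNUM : (0:ℝ) ≤ (x*(L^2-1)+l*(1-E^2))*((x-l)^2+y^2)
        - 4*x*l*((x-l)*(1-L*E*c) + L*E*y*s) - l*E^2*((x-l)^2+y^2)*(s^2+c^2-1) := by
      rw [hcs]; ring_nf; linarith [hkey]
    have hstep : (((x+l) - (E/L)*((x+l)*c - y*s))*L/((x+l)^2+y^2)
          - ((x-l)*(1-(L*E)*c) + (L*E)*y*s)/(L*((x-l)^2+y^2)))/2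
        - l * L / 2 * ((((1 - (E/L)*c)^2 + ((E/L)*s)^2)) / ((x+l)^2 + y^2))
        = ((x*(L^2-1)+l*(1-E^2))*((x-l)^2+y^2)
        - 4*x*l*((x-l)*(1-L*E*c) + L*E*y*s) - l*E^2*((x-l)^2+y^2)*(s^2+c^2-1))
          / (2*L*(((x+l)^2+y^2))*((x-l)^2+y^2)) := by
      field_simp
      ring
    have hden : (0:ℝ) < 2*L*(((x+l)^2+y^2))*((x-l)^2+y^2) := by positivity
    have hdiv := div_nonneg hNUM hden.le
    linarith [hstep ▸ hdiv]
end

section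
/- Let G(z) = 16/(15z) - 8/(3z³) + 4/z⁴ - 4/z⁶ + (4e^{-2z}/z⁴)((z+1)/z)². For z = -b + it with 0.14 ≤ b ≤ 1.25 and |t| ≥ 8, one has Re G(z) < -1/(140|z|²). -/
private lemma key_exp_16 (b : ℝ) (hb : 0.14 ≤ b) (hb' : b ≤ 1.25) :
    (65/16)*(1 + Real.exp (2*b)) < 76*b - 16/35 := by
  have e1 : Real.exp 0.28 ≤ 25/18 := by
    have h := Real.add_one_le_exp (-0.28)
    have h2 : (0.72:ℝ) ≤ Real.exp (-0.28) := by linarith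
    rw [Real.exp_neg] at h2
    have := inv_anti₀ (by norm_num) h2
    simpa using this.trans_eq (by norm_num)
  have e2 : Real.exp 2.5 ≤ 18 := by
    have h1 : Real.exp 0.25 ≤ 4/3 := by
      have h := Real.add_one_le_exp (-0.25)
      have h2 : (0.75:ℝ) ≤ Real.exp (-0.25) := by linarith
      rw [Real.exp_neg] at h2
      have := inv_anti₀ (by norm_num) h2
      simpa using this.trans_eq (by norm_num)
    have h2 : Real.exp 2.5 = Real.exp 0.25 ^ (10:ℕ) := by
      rw [← Real.exp_nat_mul]; norm_num
    rw [h2]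
    calc Real.exp 0.25 ^ 10 ≤ (4/3)^10 := pow_le_pow_left₀ (Real.exp_pos _).le h1 10
      _ ≤ 18 := by norm_num
  have hμ0 : (0:ℝ) ≤ (1.25 - b)/1.11 := div_nonneg (by linarith) (by norm_num)
  have hl0 : (0:ℝ) ≤ (b - 0.14)/1.11 := div_nonneg (by linarith) (by norm_num)
  have hsum : (1.25 - b)/1.11 + (b - 0.14)/1.11 = 1 := by ring
  have hconv := convexOn_exp.2 (Set.mem_univ (0.28:ℝ)) (Set.mem_univ (2.5:ℝ)) hμ0 hl0 hsum
  simp only [smul_eq_mul] at hconv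
  have harg : (1.25 - b)/1.11 * 0.28 + (b - 0.14)/1.11 * 2.5 = 2*b := by ring
  rw [harg] at hconv
  have hbd : Real.exp (2*b) ≤ (1.25 - b)/1.11 * (25/18) + (b - 0.14)/1.11 * 18 := by
    refine hconv.trans ?_
    have := mul_le_mul_of_nonneg_left e1 hμ0
    have := mul_le_mul_of_nonneg_left e2 hl0
    nlinarith
  nlinarith [hbd]

private lemma final_16 (b t n E : ℝ) (hb : 0.14 ≤ b) (hb' : b ≤ 1.25) (ht : 64 ≤ t^2)
    (hn : n = b^2 + t^2)
    (key : (65/16)*(1+E) < 76*b - 16/35) :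
    -16*b/(15*n) - 8*(3*b*t^2-b^3)/(3*n^3) + 4/n^2 + 4/n^3 + (65/16)*E/n^2
      < -1/(140*n) := by
  have hn64 : (64:ℝ) ≤ n := by nlinarith
  have hn0 : (0:ℝ) < n := by linarith
  have hne : n ≠ 0 := hn0.ne'
  have hEq : -16*b/(15*n) - 8*(3*b*t^2-b^3)/(3*n^3) + 4/n^2 + 4/n^3 + (65/16)*E/n^2
      - (-1/(140*n))
      = (-448*b*n^2 - 1120*(3*b*t^2-b^3) + 1680*n + 1680 + (6825/4)*E*n + 3*n^2)
        / (420*n^3) := by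
    field_simp
    ring
  have hC : (0:ℝ) ≤ 112*b*(t^2 - 39*b^2) := by nlinarith
  have hA : (0:ℝ) ≤ (n - 64) * (448*b - 3) * n :=
    mul_nonneg (mul_nonneg (by linarith) (by linarith)) hn0.le
  have hB : (0:ℝ) < ((76*b - 16/35) - (65/16)*(1+E)) * n :=
    mul_pos (by linarith) hn0
  have hNum : (-448*b*n^2 - 1120*(3*b*t^2-b^3) + 1680*n + 1680 + (6825/4)*E*n + 3*n^2) < 0 := by
    nlinarith [hA, hB, hC, hn64]
  have hpos : (0:ℝ) < 420*n^3 := by positivity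
  have hlt : -16*b/(15*n) - 8*(3*b*t^2-b^3)/(3*n^3) + 4/n^2 + 4/n^3 + (65/16)*E/n^2
      - (-1/(140*n)) < 0 := by
    rw [hEq]
    exact div_neg_of_neg_of_pos hNum hpos
  linarith

theorem stmt_16 (G : ℂ → ℂ)
    (hG : ∀ z, G z = 16 / (15 * z) - 8 / (3 * z^3) + 4 / z^4 - 4 / z^6 +
      (4 * Complex.exp (-2 * z) / z^4) * ((z + 1) / z)^2)
    (b t : ℝ) (hb : 0.14 ≤ b) (hb' : b ≤ 1.25) (ht : 8 ≤ |t|) :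
    (G (-(b:ℂ) + t * Complex.I)).re <
      -1 / (140 * ‖-(b:ℂ) + t * Complex.I‖^2) := by
  set z : ℂ := -(b:ℂ) + t * Complex.I with hzdef
  have hre : z.re = -b := by simp [hzdef]
  have him : z.im = t := by simp [hzdef]
  have ht2 : (64:ℝ) ≤ t^2 := by
    have h := _root_.sq_abs t
    nlinarith [abs_nonneg t]
  have hz : z ≠ 0 := by
    intro h
    have h2 : z.im = 0 := by rw [h]; simp
    rw [him] at h2
    nlinarith
  have hns : Complex.normSq z = b^2 + t^2 := by
    rw [Complex.normSq_apply, hre, him]; ring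
  have hn0 : (0:ℝ) < b^2+t^2 := by nlinarith
  have hne : (b^2+t^2) ≠ 0 := hn0.ne'
  -- term 1
  have h1 : (16 / (15*z)).re = -16*b/(15*(b^2+t^2)) := by
    have e : (16:ℂ)/(15*z) = (16/15 : ℂ) * z⁻¹ := by field_simp
    rw [e, Complex.mul_re, Complex.inv_re, Complex.inv_im, hre, him, hns]
    norm_num
    field_simp
  -- term 2
  have hz3re : (z^3).re = -b^3 + 3*b*t^2 := by
    simp [pow_succ, Complex.mul_re, Complex.mul_im, hre, him]
    ring
  have hns3 : Complex.normSq (z^3) = (b^2+t^2)^3 := by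
    rw [map_pow, hns]
  have hz3 : z^3 ≠ 0 := pow_ne_zero _ hz
  have h2 : (8 / (3*z^3)).re = 8*(3*b*t^2 - b^3)/(3*(b^2+t^2)^3) := by
    have e : (8:ℂ)/(3*z^3) = (8/3 : ℂ) * (z^3)⁻¹ := by field_simp
    rw [e, Complex.mul_re, Complex.inv_re, Complex.inv_im, hz3re, hns3]
    norm_num
    field_simp
    ring
  -- bounds on the remaining terms
  have habs2 : ‖z‖ ^ 2 = b^2 + t^2 := by rw [Complex.sq_norm, hns]
  have h3 : |(4 / z^4 : ℂ).re| ≤ 4/(b^2+t^2)^2 := by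
    refine (Complex.abs_re_le_norm _).trans ?_
    rw [norm_div, norm_pow]
    simp only [Complex.norm_ofNat]
    rw [show ‖z‖^4 = (‖z‖ ^2)^2 by ring, habs2]
  have h4 : |(4 / z^6 : ℂ).re| ≤ 4/(b^2+t^2)^3 := by
    refine (Complex.abs_re_le_norm _).trans ?_
    rw [norm_div, norm_pow]
    simp only [Complex.norm_ofNat]
    rw [show ‖z‖^6 = (‖z‖ ^2)^3 by ring, habs2]
  have h5 : |((4 * Complex.exp (-2 * z) / z^4) * ((z + 1) / z)^2).re|
      ≤ (65/16) * Real.exp (2*b) / (b^2+t^2)^2 := by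
    refine (Complex.abs_re_le_norm _).trans ?_
    simp only [norm_mul, norm_div, norm_pow]
    have hexp : ‖Complex.exp (-2*z)‖ = Real.exp (2*b) := by
      rw [Complex.norm_exp]
      congr 1
      simp [hre]
    have hz1 : ‖z+1‖^2 ≤ (b^2+t^2) + 1 := by
      rw [Complex.sq_norm, Complex.normSq_apply]
      simp [hre, him]
      nlinarith
    have habs0 : 0 < ‖z‖ := norm_pos_iff.mpr hz
    calc ‖(4:ℂ)‖ * ‖Complex.exp (-2*z)‖ / ‖z‖ ^4 *
          (‖z+1‖ / ‖z‖)^2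
        = 4 * Real.exp (2*b) / (b^2+t^2)^2 * (‖z+1‖^2/(b^2+t^2)) := by
          rw [hexp]
          simp only [Complex.norm_ofNat]
          rw [div_pow]
          rw [show ‖z‖^4 = (‖z‖ ^2)^2 by ring, habs2]
      _ ≤ 4 * Real.exp (2*b) / (b^2+t^2)^2 * (65/64) := by
          apply mul_le_mul_of_nonneg_left _ (by positivity)
          rw [div_le_iff₀ hn0]
          nlinarith [hz1]
      _ = 65/16 * Real.exp (2*b) / (b^2+t^2)^2 := by ring
  -- assemble
  rw [hG, habs2]
  simp only [Complex.add_re, Complex.sub_re]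
  rw [h1, h2]
  have hkey := key_exp_16 b hb hb'
  have hfin := final_16 b t (b^2+t^2) (Real.exp (2*b)) hb hb' ht2 rfl hkey
  have a3 := abs_le.mp h3
  have a4 := abs_le.mp h4
  have a5 := abs_le.mp h5
  linarith [a3.1, a3.2, a4.1, a4.2, a5.1, a5.2, hfin]
end

section
/- Let G(z) = 16/(15z) - 8/(3z³) + 4/z⁴ - 4/z⁶ + (4e^{-2z}/z⁴)((z+1)/z)² and G'(z) = -16/(15z²) + 8/z⁴ - 16/z⁵ + 24/z⁷ - (8e^{-2z}/z⁴)(1 + 4/z + 6/z² + 3/z³). Then for z = a + it with 0 ≤ a ≤ 13 and |t| ≥ 14, Re G'(z) > 9/|z|⁴. -/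
open Complex

theorem stmt_17 (G' : ℂ → ℂ)
    (hG' : ∀ z, G' z = -16 / (15 * z^2) + 8 / z^4 - 16 / z^5 + 24 / z^7 -
      (8 * Complex.exp (-2 * z) / z^4) * (1 + 4 / z + 6 / z^2 + 3 / z^3))
    (a t : ℝ) (ha : 0 ≤ a) (ha' : a ≤ 13) (ht : 14 ≤ |t|) :
    9 / ‖(a:ℂ) + t * Complex.I‖^4 < (G' ((a:ℂ) + t * Complex.I)).re := by
  set z : ℂ := (a:ℂ) + t * Complex.I with hzdef
  have hre : z.re = a := by simp [hzdef]
  have him : z.im = t := by simp [hzdef]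
  set r : ℝ := ‖z‖ with hrdef
  have hr14 : (14:ℝ) ≤ r := le_trans (by simpa [him] using ht) (Complex.abs_im_le_norm z)
  have hr0 : (0:ℝ) < r := lt_of_lt_of_le (by norm_num) hr14
  have hz : z ≠ 0 := by
    intro h
    rw [hrdef, h] at hr0
    simp at hr0
  have hr2 : r^2 = a^2 + t^2 := by
    rw [hrdef, Complex.sq_norm, Complex.normSq_apply, hre, him]; ring
  have ht2 : (196:ℝ) ≤ t^2 := by
    have h := _root_.sq_abs t
    nlinarith [ht, abs_nonneg t]
  have ha2 : a^2 ≤ 169 := by nlinarith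
  -- term 1 exact value
  have h1 : ((-16:ℂ)/(15*z^2)).re = 16*(t^2-a^2)/(15*r^4) := by
    have hN : Complex.normSq (15*z^2) = 225 * r^4 := by
      have hzn : Complex.normSq z = r^2 := by rw [← Complex.sq_norm]
      rw [Complex.normSq_mul, map_pow, hzn]
      norm_num [Complex.normSq_apply]
      ring
    rw [Complex.div_re, hN]
    simp [Complex.mul_re, Complex.mul_im, pow_two, hre, him]
    field_simp
    ring
  -- abs bounds for simple terms
  have habs4 : ‖(8:ℂ)/z^4‖ = 8/r^4 := by
    rw [norm_div, norm_pow]; norm_num; rfl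
  have habs5 : ‖(16:ℂ)/z^5‖ = 16/r^5 := by
    rw [norm_div, norm_pow]; norm_num; rfl
  have habs7 : ‖(24:ℂ)/z^7‖ = 24/r^7 := by
    rw [norm_div, norm_pow]; norm_num; rfl
  have hlow : ∀ w : ℂ, -‖w‖ ≤ w.re := fun w =>
    (neg_le_neg (Complex.abs_re_le_norm w)).trans (neg_abs_le _)
  -- exp bound
  have hexp : ‖Complex.exp (-2*z)‖ ≤ 1 := by
    rw [Complex.norm_exp]
    have : (-2*z).re = -2*a := by simp [hre]
    rw [this]
    exact Real.exp_le_one_iff.mpr (by nlinarith)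
  -- polynomial factor bound
  have hS : ‖1 + 4/z + 6/z^2 + 3/z^3‖ ≤ 1 + 4/r + 6/r^2 + 3/r^3 := by
    have e1 : ‖(4:ℂ)/z‖ = 4/r := by rw [norm_div]; norm_num; rfl
    have e2 : ‖(6:ℂ)/z^2‖ = 6/r^2 := by rw [norm_div, norm_pow]; norm_num; rfl
    have e3 : ‖(3:ℂ)/z^3‖ = 3/r^3 := by rw [norm_div, norm_pow]; norm_num; rfl
    calc ‖1 + 4/z + 6/z^2 + 3/z^3‖
        ≤ ‖1 + 4/z + 6/z^2‖ + ‖(3:ℂ)/z^3‖ := norm_add_le _ _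
      _ ≤ ‖1 + 4/z‖ + ‖(6:ℂ)/z^2‖ + ‖(3:ℂ)/z^3‖ := by
          gcongr; exact norm_add_le _ _
      _ ≤ ‖(1:ℂ)‖ + ‖(4:ℂ)/z‖ + ‖(6:ℂ)/z^2‖ + ‖(3:ℂ)/z^3‖ := by
          gcongr; exact norm_add_le _ _
      _ = 1 + 4/r + 6/r^2 + 3/r^3 := by rw [e1, e2, e3]; simp
  have hB : ‖(8 * Complex.exp (-2*z) / z^4) * (1 + 4/z + 6/z^2 + 3/z^3)‖
      ≤ 8/r^4 * (1 + 4/r + 6/r^2 + 3/r^3) := by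
    rw [norm_mul, norm_div, norm_mul, norm_pow]
    have h8 : ‖(8:ℂ)‖ = 8 := by norm_num
    rw [h8]
    have hS0 := norm_nonneg (1 + 4/z + 6/z^2 + 3/z^3)
    have key : ‖Complex.exp (-2*z)‖ * ‖1 + 4/z + 6/z^2 + 3/z^3‖
        ≤ 1 + 4/r + 6/r^2 + 3/r^3 := by
      simpa using mul_le_mul hexp hS hS0 zero_le_one
    calc 8 * ‖Complex.exp (-2*z)‖ / r^4 * ‖1 + 4/z + 6/z^2 + 3/z^3‖
        = 8/r^4 * (‖Complex.exp (-2*z)‖ * ‖1 + 4/z + 6/z^2 + 3/z^3‖) := by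
          ring
      _ ≤ 8/r^4 * (1 + 4/r + 6/r^2 + 3/r^3) :=
          mul_le_mul_of_nonneg_left key (by positivity)
  -- put it together
  rw [hG']
  clear hG'
  have hre_split : ((-16:ℂ) / (15 * z^2) + 8 / z^4 - 16 / z^5 + 24 / z^7 -
      (8 * Complex.exp (-2 * z) / z^4) * (1 + 4 / z + 6 / z^2 + 3 / z^3)).re
      = ((-16:ℂ)/(15*z^2)).re + ((8:ℂ)/z^4).re - ((16:ℂ)/z^5).re + ((24:ℂ)/z^7).re -
        ((8 * Complex.exp (-2*z) / z^4) * (1 + 4/z + 6/z^2 + 3/z^3)).re := by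
    simp [Complex.add_re, Complex.sub_re]
  rw [hre_split, h1]
  have b4 := hlow ((8:ℂ)/z^4); rw [habs4] at b4
  have b5 : ((16:ℂ)/z^5).re ≤ 16/r^5 := habs5 ▸ Complex.re_le_norm _
  have b7 := hlow ((24:ℂ)/z^7); rw [habs7] at b7
  have bB : ((8 * Complex.exp (-2*z) / z^4) * (1 + 4/z + 6/z^2 + 3/z^3)).re
      ≤ 8/r^4 * (1 + 4/r + 6/r^2 + 3/r^3) := (Complex.re_le_norm _).trans hB
  have hfin : 9/r^4 < 16*(t^2-a^2)/(15*r^4) - 8/r^4 - 16/r^5 - 24/r^7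
      - 8/r^4 * (1 + 4/r + 6/r^2 + 3/r^3) := by
    have e1 : 16*(t^2-a^2)/(15*r^4) - 8/r^4 - 16/r^5 - 24/r^7
        - 8/r^4 * (1 + 4/r + 6/r^2 + 3/r^3)
        = (16*(t^2-a^2)*r^3/15 - 16*r^3 - 48*r^2 - 48*r - 48)/r^7 := by
      field_simp
      ring
    have e2 : (9:ℝ)/r^4 = 9*r^3/r^7 := by
      field_simp
    rw [e1, e2, div_lt_div_iff_of_pos_right (by positivity)]
    have hta : (27:ℝ) ≤ t^2 - a^2 := by linarith
    have m2 : 14*r ≤ r^2 := by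
      have := mul_le_mul_of_nonneg_right hr14 hr0.le
      calc 14*r ≤ r*r := this
        _ = r^2 := by ring
    have m1 : 14*r^2 ≤ r^3 := by
      have h := mul_le_mul_of_nonneg_right m2 hr0.le
      calc 14*r^2 = 14*r*r := by ring
        _ ≤ r^2*r := h
        _ = r^3 := by ring
    have m0 : 27*r^3 ≤ (t^2-a^2)*r^3 := mul_le_mul_of_nonneg_right hta (by positivity)
    linarith
  linarith
end
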